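/- arXiv:math/0205206 — 3 statements merged into one kernel-verified Lean document; each statement's English description precedes it below -/
import Mathlib

section
/- For all n ≥ 2, the number of permutations of {1,...,n} avoiding 132, 2341, and 3241 that have exactly one right-to-left maximum equals the Pell number p_{n-1}. -/
/-- A function `π : Fin n → Fin n` contains the pattern `p : Fin k → ℕ` if there is a
strictly increasing choice of indices whose images under `π` have the same pairwise
order relations as the entries of `p`. -/
def Contains {n k : ℕ} (π : Fin n → Fin n) (p : Fin k → ℕ) : Prop :=
  ∃ f : Fin k → Fin n, StrictMono f ∧ ∀ i j, p i < p j ↔ π (f i) < π (f j)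

/-- `π` avoids the pattern `p`. -/
def Avoids {n k : ℕ} (π : Fin n → Fin n) (p : Fin k → ℕ) : Prop := ¬ Contains π p

/-- The set of permutations of `Fin n` avoiding the patterns 132, 2341 and 3241,
i.e. the 132-avoiding two-stack sortable permutations. -/
def TSS132 (n : ℕ) : Set (Fin n → Fin n) :=
  {π | Function.Bijective π ∧ Avoids π ![1,3,2] ∧ Avoids π ![2,3,4,1] ∧ Avoids π ![3,2,4,1]}

/-- The Pell numbers. -/
def pell : ℕ → ℕ
  | 0 => 0
  | 1 => 1
  | n+2 => 2 * pell (n+1) + pell n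

namespace TSSaux
open Function Fin

lemma contains_mono {n m k : ℕ} {π : Fin n → Fin n} {π' : Fin m → Fin m} {p : Fin k → ℕ}
    (e : Fin n → Fin m) (he : StrictMono e)
    (hv : ∀ i j : Fin n, π i < π j ↔ π' (e i) < π' (e j)) :
    Contains π p → Contains π' p := by
  rintro ⟨f, hf, hp⟩
  exact ⟨e ∘ f, he.comp hf, fun i j => (hp i j).trans (hv _ _)⟩

def endExt {n : ℕ} (π : Fin n → Fin n) : Fin (n+1) → Fin (n+1) :=
  Fin.snoc (fun i => (π i).castSucc) (Fin.last n)

@[simp] lemma endExt_castSucc {n : ℕ} (π : Fin n → Fin n) (i : Fin n) :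
    endExt π i.castSucc = (π i).castSucc := by simp [endExt]

@[simp] lemma endExt_last {n : ℕ} (π : Fin n → Fin n) :
    endExt π (Fin.last n) = Fin.last n := by simp [endExt]

def frontExt {n : ℕ} (π : Fin n → Fin n) : Fin (n+1) → Fin (n+1) :=
  Fin.cons (Fin.last n) (fun i => (π i).castSucc)

@[simp] lemma frontExt_zero {n : ℕ} (π : Fin n → Fin n) :
    frontExt π 0 = Fin.last n := rfl

@[simp] lemma frontExt_succ {n : ℕ} (π : Fin n → Fin n) (i : Fin n) :
    frontExt π i.succ = (π i).castSucc := by simp [frontExt]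

def pairExt {n : ℕ} (π : Fin n → Fin n) : Fin (n+2) → Fin (n+2) :=
  Fin.cons (Fin.last n).castSucc
    (Fin.cons (Fin.last (n+1)) (fun i => (π i).castSucc.castSucc))

@[simp] lemma pairExt_zero {n : ℕ} (π : Fin n → Fin n) :
    pairExt π 0 = (Fin.last n).castSucc := rfl

@[simp] lemma pairExt_one {n : ℕ} (π : Fin n → Fin n) :
    pairExt π 1 = Fin.last (n+1) := rfl

@[simp] lemma pairExt_ss {n : ℕ} (π : Fin n → Fin n) (i : Fin n) :
    pairExt π i.succ.succ = (π i).castSucc.castSucc := by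
  have : (i.succ.succ : Fin (n+2)) = Fin.succ (Fin.succ i) := rfl
  simp [pairExt, Fin.cons_succ]


lemma endExt_lt_last {n : ℕ} (π : Fin n → Fin n) {j : Fin (n+1)} (h : j ≠ Fin.last n) :
    endExt π j < Fin.last n := by
  rcases (Fin.eq_castSucc_or_eq_last j).resolve_right h with ⟨i, rfl⟩
  simp [endExt, Fin.castSucc_lt_last]

lemma contains_endExt {n k : ℕ} {π : Fin n → Fin n} {p : Fin (k+1) → ℕ}
    (hp : ∃ i0, p (Fin.last k) < p i0) :
    Contains (endExt π) p → Contains π p := by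
  rintro ⟨f, hf, hiff⟩
  by_cases hl : f (Fin.last k) = Fin.last n
  · obtain ⟨i0, hi0⟩ := hp
    have h1 := (hiff (Fin.last k) i0).mp hi0
    rw [hl] at h1
    simp [endExt] at h1
    exact absurd h1 (by simpa using (Fin.le_last _).not_gt)
  · have hne : ∀ i, f i ≠ Fin.last n := by
      intro i h
      exact hl (le_antisymm (Fin.le_last _) (h ▸ hf.monotone (Fin.le_last i)))
    refine ⟨fun i => (f i).castPred (hne i), ?_, ?_⟩
    · intro a b hab
      have h := hf hab
      rw [Fin.lt_def] at h ⊢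
      simpa using h
    · intro i j
      have h := hiff i j
      have e1 : f i = ((f i).castPred (hne i)).castSucc := by simp
      have e2 : f j = ((f j).castPred (hne j)).castSucc := by simp
      rw [e1, e2] at h
      simp only [endExt] at h
      rw [Fin.snoc_castSucc, Fin.snoc_castSucc, Fin.castSucc_lt_castSucc_iff] at h
      exact h

lemma contains_frontExt {n k : ℕ} {π : Fin n → Fin n} {p : Fin (k+1) → ℕ}
    (hp : ∃ i0, p 0 < p i0) :
    Contains (frontExt π) p → Contains π p := by
  rintro ⟨f, hf, hiff⟩
  by_cases h0 : f 0 = 0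
  · obtain ⟨i0, hi0⟩ := hp
    have h1 := (hiff 0 i0).mp hi0
    rw [h0] at h1
    simp only [frontExt, Fin.cons_zero] at h1
    exact absurd h1 (Fin.le_last _).not_gt
  · have hne : ∀ i, f i ≠ 0 := by
      intro i h
      exact h0 (le_antisymm (le_of_le_of_eq (hf.monotone (Fin.zero_le i)) h) (Fin.zero_le _))
    refine ⟨fun i => (f i).pred (hne i), ?_, ?_⟩
    · intro a b hab
      have h := hf hab
      rw [Fin.lt_def] at h ⊢
      simp only [Fin.coe_pred]
      have ha : (f a).val ≠ 0 := by intro h; exact hne a (Fin.ext (by rw [h]; simp))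
      omega
    · intro i j
      have h := hiff i j
      have e1 : f i = ((f i).pred (hne i)).succ := (Fin.succ_pred _ _).symm
      have e2 : f j = ((f j).pred (hne j)).succ := (Fin.succ_pred _ _).symm
      rw [e1, e2] at h
      simp only [frontExt, Fin.cons_succ] at h
      rw [Fin.castSucc_lt_castSucc_iff] at h
      exact h

lemma pairExt_lt_n {n : ℕ} (π : Fin n → Fin n) {j : Fin (n+2)} (h0 : j ≠ 0) (h1 : j ≠ 1) :
    pairExt π j < (Fin.last n).castSucc := by
  induction j using Fin.cases with
  | zero => exact absurd rfl h0
  | succ j' =>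
    induction j' using Fin.cases with
    | zero => exact absurd rfl h1
    | succ i =>
      simp only [pairExt, Fin.cons_succ]
      rw [Fin.lt_def]
      simpa using (π i).isLt

lemma pairExt_hits_one {n k : ℕ} {π : Fin n → Fin n} {p : Fin k → ℕ}
    {f : Fin k → Fin (n+2)}
    (hiff : ∀ i j, p i < p j ↔ pairExt π (f i) < pairExt π (f j))
    {j i : Fin k} (hfj : f j = 1) (hpi : p j < p i) : False := by
  have h := (hiff j i).mp hpi
  rw [hfj] at h
  have : pairExt π 1 = Fin.last (n+1) := rfl
  rw [this] at h
  exact absurd h (Fin.le_last _).not_gt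

-- generic tail-extraction when all indices ≥ 2
lemma pairExt_tail {n k : ℕ} {π : Fin n → Fin n} {p : Fin k → ℕ}
    {f : Fin k → Fin (n+2)} (hf : StrictMono f)
    (hiff : ∀ i j, p i < p j ↔ pairExt π (f i) < pairExt π (f j))
    (h2 : ∀ i, 2 ≤ (f i).val) : Contains π p := by
  have hne0 : ∀ i, f i ≠ 0 := fun i h => by have := h2 i; rw [h] at this; simp at this
  have hne1 : ∀ i, (f i).pred (hne0 i) ≠ 0 := by
    intro i h
    have := h2 i
    have : ((f i).pred (hne0 i)).val = (f i).val - 1 := Fin.coe_pred _ _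
    rw [h] at this
    simp at this
    omega
  refine ⟨fun i => ((f i).pred (hne0 i)).pred (hne1 i), ?_, ?_⟩
  · intro a b hab
    have h := hf hab
    rw [Fin.lt_def] at h ⊢
    simp only [Fin.coe_pred]
    have := h2 a
    omega
  · intro i j
    have h := hiff i j
    have e : ∀ i, f i = ((((f i).pred (hne0 i)).pred (hne1 i)).succ).succ := by
      intro i
      rw [Fin.succ_pred, Fin.succ_pred]
    rw [e i, e j] at h
    simp only [pairExt, Fin.cons_succ] at h
    rw [Fin.castSucc_lt_castSucc_iff, Fin.castSucc_lt_castSucc_iff] at h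
    exact h

lemma contains_pairExt4 {n : ℕ} {π : Fin n → Fin n} {p : Fin 4 → ℕ}
    (h02 : p 0 < p 2) (hmax : ∀ j, j ≠ 2 → p j < p 2) :
    Contains (pairExt π) p → Contains π p := by
  rintro ⟨f, hf, hiff⟩
  by_cases hA : ∃ j, f j = 1
  · obtain ⟨j, hj⟩ := hA
    by_cases hj2 : j = 2
    · -- f 2 = 1 : impossible since f 0 < f 1 < 1
      subst hj2
      have h01 : f 0 < f 1 := hf (by decide)
      have h12 : f 1 < f 2 := hf (by decide)
      rw [hj] at h12
      rw [Fin.lt_def] at h01 h12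
      have hv : ((1 : Fin (n+2))).val = 1 := rfl
      omega
    · exact absurd (pairExt_hits_one hiff hj (hmax j hj2)) not_false
  · by_cases hB : f 0 = 0
    · -- second-largest at front; p 0 < p 2 but value at f 2 is smaller
      have hf2ne0 : f 2 ≠ 0 := by
        intro h
        have := hf (show (0:Fin 4) < 2 by decide)
        rw [hB, h] at this
        exact lt_irrefl _ this
      have hf2ne1 : f 2 ≠ 1 := fun h => hA ⟨2, h⟩
      have h := (hiff 0 2).mp h02
      rw [hB] at h
      have h0 : pairExt π 0 = (Fin.last n).castSucc := rfl
      rw [h0] at h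
      exact absurd (h.trans (pairExt_lt_n π hf2ne0 hf2ne1)) (lt_irrefl _)
    · refine pairExt_tail hf hiff ?_
      intro i
      have hne0 : f i ≠ 0 := by
        intro h
        rcases eq_or_lt_of_le (Fin.zero_le i) with h0 | h0
        · exact hB (h0 ▸ h)
        · have := hf h0
          rw [h] at this
          exact absurd this (Fin.not_lt.mpr (Fin.zero_le _))
      have hne1 : f i ≠ 1 := fun h => hA ⟨i, h⟩
      have v0 : (f i).val ≠ 0 := by intro h; exact hne0 (Fin.ext (by rw [h]; simp))
      have v1 : (f i).val ≠ 1 := by simpa [Fin.ext_iff] using hne1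
      omega

lemma contains_pairExt132 {n : ℕ} {π : Fin n → Fin n} {p : Fin 3 → ℕ}
    (h01 : p 0 < p 1) (h02 : p 0 < p 2) (h21 : p 2 < p 1) :
    Contains (pairExt π) p → Contains π p := by
  rintro ⟨f, hf, hiff⟩
  by_cases hA : ∃ j, f j = 1
  · obtain ⟨j, hj⟩ := hA
    have hj1 : j = 1 := by
      fin_cases j
      · exact absurd (pairExt_hits_one hiff hj h01) not_false
      · rfl
      · exact absurd (pairExt_hits_one hiff hj h21) not_false
    subst hj1
    have h01' : f 0 < f 1 := hf (by decide)
    rw [hj] at h01'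
    have hB : f 0 = 0 := by
      rw [Fin.lt_def] at h01'
      simpa using h01'
    have hf2ne1 : f 2 ≠ 1 := by
      intro h
      have := hf (show (1:Fin 3) < 2 by decide)
      rw [hj, h] at this
      exact lt_irrefl _ this
    have hf2ne0 : f 2 ≠ 0 := by
      intro h
      have := hf (show (0:Fin 3) < 2 by decide)
      rw [hB, h] at this
      exact lt_irrefl _ this
    have h := (hiff 0 2).mp h02
    rw [hB] at h
    have h0 : pairExt π 0 = (Fin.last n).castSucc := rfl
    rw [h0] at h
    exact absurd (h.trans (pairExt_lt_n π hf2ne0 hf2ne1)) (lt_irrefl _)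
  · by_cases hB : f 0 = 0
    · have hf2ne0 : f 2 ≠ 0 := by
        intro h
        have := hf (show (0:Fin 3) < 2 by decide)
        rw [hB, h] at this
        exact lt_irrefl _ this
      have hf2ne1 : f 2 ≠ 1 := fun h => hA ⟨2, h⟩
      have h := (hiff 0 2).mp h02
      rw [hB] at h
      have h0 : pairExt π 0 = (Fin.last n).castSucc := rfl
      rw [h0] at h
      exact absurd (h.trans (pairExt_lt_n π hf2ne0 hf2ne1)) (lt_irrefl _)
    · refine pairExt_tail hf hiff ?_
      intro i
      have hne0 : f i ≠ 0 := by
        intro h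
        rcases eq_or_lt_of_le (Fin.zero_le i) with h0 | h0
        · exact hB (h0 ▸ h)
        · have := hf h0
          rw [h] at this
          exact absurd this (Fin.not_lt.mpr (Fin.zero_le _))
      have hne1 : f i ≠ 1 := fun h => hA ⟨i, h⟩
      have v0 : (f i).val ≠ 0 := by intro h; exact hne0 (Fin.ext (by rw [h]; simp))
      have v1 : (f i).val ≠ 1 := by simpa [Fin.ext_iff] using hne1
      omega

-- val lemmas
@[simp] lemma endExt_val_castSucc {n : ℕ} (π : Fin n → Fin n) (i : Fin n) :
    (endExt π i.castSucc) = (π i).castSucc := by simp [endExt]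
@[simp] lemma endExt_val_last {n : ℕ} (π : Fin n → Fin n) :
    endExt π (Fin.last n) = Fin.last n := by simp [endExt]

lemma endExt_injOn : ∀ {n : ℕ} {π : Fin n → Fin n}, Injective π → Injective (endExt π) := by
  intro n π hπ a b hab
  induction a using Fin.lastCases with
  | last =>
    induction b using Fin.lastCases with
    | last => rfl
    | cast j =>
      rw [endExt_val_last, endExt_val_castSucc] at hab
      exact absurd hab.symm (Fin.ne_last_of_lt (Fin.castSucc_lt_last _))
  | cast i =>
    induction b using Fin.lastCases with
    | last =>
      rw [endExt_val_last, endExt_val_castSucc] at hab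
      exact absurd hab (Fin.ne_last_of_lt (Fin.castSucc_lt_last _))
    | cast j =>
      rw [endExt_val_castSucc, endExt_val_castSucc] at hab
      exact congrArg Fin.castSucc (hπ (Fin.castSucc_injective _ hab))

lemma frontExt_inj : ∀ {n : ℕ} {π : Fin n → Fin n}, Injective π → Injective (frontExt π) := by
  intro n π hπ a b hab
  induction a using Fin.cases with
  | zero =>
    induction b using Fin.cases with
    | zero => rfl
    | succ j =>
      simp only [frontExt, Fin.cons_zero, Fin.cons_succ] at hab
      exact absurd hab.symm (Fin.ne_last_of_lt (Fin.castSucc_lt_last _))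
  | succ i =>
    induction b using Fin.cases with
    | zero =>
      simp only [frontExt, Fin.cons_zero, Fin.cons_succ] at hab
      exact absurd hab (Fin.ne_last_of_lt (Fin.castSucc_lt_last _))
    | succ j =>
      simp only [frontExt, Fin.cons_succ] at hab
      exact congrArg Fin.succ (hπ (Fin.castSucc_injective _ hab))

lemma pairExt_vt {n : ℕ} (π : Fin n → Fin n) {j : Fin (n+2)} (h : 2 ≤ j.val) :
    (pairExt π j).val = (π ⟨j.val - 2, by omega⟩).val := by
  induction j using Fin.cases with
  | zero => simp at h
  | succ j' =>
    induction j' using Fin.cases with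
    | zero => simp [Fin.val_one] at h
    | succ i =>
      have hv : ((i.succ.succ : Fin (n+2))).val = i.val + 2 := rfl
      simp only [pairExt, Fin.cons_succ, hv]
      simp

lemma pairExt_inj : ∀ {n : ℕ} {π : Fin n → Fin n}, Injective π → Injective (pairExt π) := by
  intro n π hπ a b hab
  have h := congrArg Fin.val hab
  have v0 : ∀ x : Fin (n+2), x.val = 0 → (pairExt π x).val = n := by
    intro x hx
    have : x = 0 := Fin.ext hx
    subst this; simp [pairExt]
  have v1 : ∀ x : Fin (n+2), x.val = 1 → (pairExt π x).val = n+1 := by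
    intro x hx
    have : x = 1 := Fin.ext hx
    subst this; simp [pairExt]
  apply Fin.ext
  by_cases ha0 : a.val = 0 <;> by_cases hb0 : b.val = 0
  · omega
  · exfalso
    rw [v0 a ha0] at h
    by_cases hb1 : b.val = 1
    · rw [v1 b hb1] at h; omega
    · rw [pairExt_vt π (by omega)] at h
      have := (π ⟨b.val - 2, by omega⟩).isLt; omega
  · exfalso
    rw [v0 b hb0] at h
    by_cases ha1 : a.val = 1
    · rw [v1 a ha1] at h; omega
    · rw [pairExt_vt π (by omega)] at h
      have := (π ⟨a.val - 2, by omega⟩).isLt; omega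
  · by_cases ha1 : a.val = 1 <;> by_cases hb1 : b.val = 1
    · omega
    · exfalso
      rw [v1 a ha1, pairExt_vt π (show 2 ≤ b.val by omega)] at h
      have := (π ⟨b.val - 2, by omega⟩).isLt; omega
    · exfalso
      rw [v1 b hb1, pairExt_vt π (show 2 ≤ a.val by omega)] at h
      have := (π ⟨a.val - 2, by omega⟩).isLt; omega
    · rw [pairExt_vt π (show 2 ≤ a.val by omega),
        pairExt_vt π (show 2 ≤ b.val by omega)] at h
      have := hπ (Fin.ext h)
      have := congrArg Fin.val this
      simp only [] at this
      omega


lemma contains_endExt_of {n k : ℕ} {π : Fin n → Fin n} {p : Fin k → ℕ} :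
    Contains π p → Contains (endExt π) p := by
  refine contains_mono Fin.castSucc (fun a b h => by rwa [Fin.castSucc_lt_castSucc_iff]) ?_
  intro i j
  rw [endExt_castSucc, endExt_castSucc, Fin.castSucc_lt_castSucc_iff]

lemma contains_frontExt_of {n k : ℕ} {π : Fin n → Fin n} {p : Fin k → ℕ} :
    Contains π p → Contains (frontExt π) p := by
  refine contains_mono Fin.succ (fun a b h => by rwa [Fin.succ_lt_succ_iff]) ?_
  intro i j
  rw [frontExt_succ, frontExt_succ, Fin.castSucc_lt_castSucc_iff]

lemma contains_pairExt_of {n k : ℕ} {π : Fin n → Fin n} {p : Fin k → ℕ} :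
    Contains π p → Contains (pairExt π) p := by
  refine contains_mono (fun i => i.succ.succ)
    (fun a b h => by simp only [Fin.succ_lt_succ_iff]; exact h) ?_
  intro i j
  rw [pairExt_ss, pairExt_ss, Fin.castSucc_lt_castSucc_iff, Fin.castSucc_lt_castSucc_iff]

lemma bij_iff_inj {m : ℕ} {π : Fin m → Fin m} : Function.Bijective π ↔ Function.Injective π :=
  ⟨fun h => h.1, fun h => ⟨h, Finite.surjective_of_injective h⟩⟩

lemma mem_endExt_iff {n : ℕ} {π : Fin n → Fin n} :
    endExt π ∈ TSS132 (n+1) ↔ π ∈ TSS132 n := by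
  constructor
  · rintro ⟨hb, h1, h2, h3⟩
    refine ⟨bij_iff_inj.mpr ?_, ?_, ?_, ?_⟩
    · intro a b hab
      have : endExt π a.castSucc = endExt π b.castSucc := by
        rw [endExt_castSucc, endExt_castSucc, hab]
      exact Fin.castSucc_injective _ (hb.1 this)
    · exact fun hc => h1 (contains_endExt_of hc)
    · exact fun hc => h2 (contains_endExt_of hc)
    · exact fun hc => h3 (contains_endExt_of hc)
  · rintro ⟨hb, h1, h2, h3⟩
    refine ⟨bij_iff_inj.mpr (endExt_injOn hb.1), ?_, ?_, ?_⟩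
    · exact fun hc => h1 (contains_endExt ⟨1, by decide⟩ hc)
    · exact fun hc => h2 (contains_endExt ⟨0, by decide⟩ hc)
    · exact fun hc => h3 (contains_endExt ⟨0, by decide⟩ hc)

lemma mem_frontExt_iff {n : ℕ} {π : Fin n → Fin n} :
    frontExt π ∈ TSS132 (n+1) ↔ π ∈ TSS132 n := by
  constructor
  · rintro ⟨hb, h1, h2, h3⟩
    refine ⟨bij_iff_inj.mpr ?_, ?_, ?_, ?_⟩
    · intro a b hab
      have : frontExt π a.succ = frontExt π b.succ := by
        rw [frontExt_succ, frontExt_succ, hab]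
      exact Fin.succ_injective _ (hb.1 this)
    · exact fun hc => h1 (contains_frontExt_of hc)
    · exact fun hc => h2 (contains_frontExt_of hc)
    · exact fun hc => h3 (contains_frontExt_of hc)
  · rintro ⟨hb, h1, h2, h3⟩
    refine ⟨bij_iff_inj.mpr (frontExt_inj hb.1), ?_, ?_, ?_⟩
    · exact fun hc => h1 (contains_frontExt ⟨1, by decide⟩ hc)
    · exact fun hc => h2 (contains_frontExt ⟨2, by decide⟩ hc)
    · exact fun hc => h3 (contains_frontExt ⟨2, by decide⟩ hc)

lemma mem_pairExt_iff {n : ℕ} {π : Fin n → Fin n} :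
    pairExt π ∈ TSS132 (n+2) ↔ π ∈ TSS132 n := by
  constructor
  · rintro ⟨hb, h1, h2, h3⟩
    refine ⟨bij_iff_inj.mpr ?_, ?_, ?_, ?_⟩
    · intro a b hab
      have : pairExt π a.succ.succ = pairExt π b.succ.succ := by
        rw [pairExt_ss, pairExt_ss, hab]
      have := hb.1 this
      have := congrArg Fin.val this
      exact Fin.ext (by simpa using this)
    · exact fun hc => h1 (contains_pairExt_of hc)
    · exact fun hc => h2 (contains_pairExt_of hc)
    · exact fun hc => h3 (contains_pairExt_of hc)
  · rintro ⟨hb, h1, h2, h3⟩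
    refine ⟨bij_iff_inj.mpr (pairExt_inj hb.1), ?_, ?_, ?_⟩
    · exact fun hc => h1 (contains_pairExt132 (by decide) (by decide) (by decide) hc)
    · exact fun hc => h2 (contains_pairExt4 (by decide) (by decide) hc)
    · exact fun hc => h3 (contains_pairExt4 (by decide) (by decide) hc)

lemma setA_eq (n : ℕ) :
    {π' ∈ TSS132 (n+1) | π' (Fin.last n) = Fin.last n} = endExt '' TSS132 n := by
  ext π'
  constructor
  · rintro ⟨hm, hl⟩
    have hinj := hm.1.1
    have hne : ∀ i : Fin n, π' i.castSucc ≠ Fin.last n := by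
      intro i h
      have := hinj (h.trans hl.symm)
      exact absurd this (Fin.ne_last_of_lt (Fin.castSucc_lt_last i))
    refine ⟨fun i => (π' i.castSucc).castPred (hne i), ?_, ?_⟩
    · have he : endExt (fun i => (π' i.castSucc).castPred (hne i)) = π' := by
        funext j
        induction j using Fin.lastCases with
        | last => rw [endExt_last, hl]
        | cast i => rw [endExt_castSucc, Fin.castSucc_castPred]
      rw [← mem_endExt_iff, he]
      exact hm
    · funext j
      induction j using Fin.lastCases with
      | last => rw [endExt_last, hl]
      | cast i => rw [endExt_castSucc, Fin.castSucc_castPred]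
  · rintro ⟨π, hπ, rfl⟩
    exact ⟨mem_endExt_iff.mpr hπ, endExt_last π⟩

lemma setB_eq (n : ℕ) :
    {π' ∈ TSS132 (n+1) | π' 0 = Fin.last n} = frontExt '' TSS132 n := by
  ext π'
  constructor
  · rintro ⟨hm, hl⟩
    have hinj := hm.1.1
    have hne : ∀ i : Fin n, π' i.succ ≠ Fin.last n := by
      intro i h
      have := hinj (h.trans hl.symm)
      exact absurd this (Fin.succ_ne_zero i)
    have he : frontExt (fun i => (π' i.succ).castPred (hne i)) = π' := by
      funext j
      induction j using Fin.cases with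
      | zero => rw [frontExt_zero, hl]
      | succ i => rw [frontExt_succ, Fin.castSucc_castPred]
    exact ⟨fun i => (π' i.succ).castPred (hne i), by rw [← mem_frontExt_iff, he]; exact hm, he⟩
  · rintro ⟨π, hπ, rfl⟩
    exact ⟨mem_frontExt_iff.mpr hπ, frontExt_zero π⟩

lemma setC_eq (n : ℕ) :
    {π' ∈ TSS132 (n+2) | π' 0 = (Fin.last n).castSucc ∧ π' 1 = Fin.last (n+1)} =
      pairExt '' TSS132 n := by
  ext π'
  constructor
  · rintro ⟨hm, h0, h1⟩
    have hinj := hm.1.1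
    have hlt : ∀ i : Fin n, (π' i.succ.succ).val < n := by
      intro i
      have hne1 : π' i.succ.succ ≠ Fin.last (n+1) := by
        intro h
        have := hinj (h.trans h1.symm)
        have := congrArg Fin.val this
        have hv : ((i.succ.succ : Fin (n+2))).val = i.val + 2 := rfl
        rw [hv] at this
        simp [Fin.val_one] at this
      have hne0 : π' i.succ.succ ≠ (Fin.last n).castSucc := by
        intro h
        have := hinj (h.trans h0.symm)
        have := congrArg Fin.val this
        have hv : ((i.succ.succ : Fin (n+2))).val = i.val + 2 := rfl
        rw [hv] at this
        simp at this
      have hv1 : (π' i.succ.succ).val ≠ n + 1 := by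
        intro h; exact hne1 (Fin.ext (by simpa using h))
      have hv0 : (π' i.succ.succ).val ≠ n := by
        intro h; exact hne0 (Fin.ext (by simpa using h))
      have := (π' i.succ.succ).isLt
      omega
    have he : pairExt (fun i => (⟨(π' i.succ.succ).val, hlt i⟩ : Fin n)) = π' := by
      funext j
      induction j using Fin.cases with
      | zero => rw [pairExt_zero, h0]
      | succ j' =>
        induction j' using Fin.cases with
        | zero => rw [show ((0 : Fin (n+1)).succ) = (1 : Fin (n+2)) from rfl, pairExt_one, h1]
        | succ i =>
          rw [pairExt_ss]
          exact Fin.ext (by simp)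
    exact ⟨_, by rw [← mem_pairExt_iff, he]; exact hm, he⟩
  · rintro ⟨π, hπ, rfl⟩
    exact ⟨mem_pairExt_iff.mpr hπ, pairExt_zero π, pairExt_one π⟩

lemma sm3 {α : Type*} [Preorder α] {a b c : α} (h1 : a < b) (h2 : b < c) :
    StrictMono ![a, b, c] := by
  intro x y hxy
  fin_cases x <;> fin_cases y <;>
    first
      | exact absurd hxy (by decide)
      | simpa using h1
      | simpa using h2
      | simpa using h1.trans h2

lemma sm4 {α : Type*} [Preorder α] {a b c d : α} (h1 : a < b) (h2 : b < c) (h3 : c < d) :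
    StrictMono ![a, b, c, d] := by
  intro x y hxy
  fin_cases x <;> fin_cases y <;>
    first
      | exact absurd hxy (by decide)
      | simpa using h1
      | simpa using h2
      | simpa using h3
      | simpa using h1.trans h2
      | simpa using h2.trans h3
      | simpa using (h1.trans h2).trans h3

lemma iff3 {m : ℕ} (π : Fin m → Fin m) (p : Fin 3 → ℕ) (a b c : Fin m)
    (H : ∀ x y : Fin 3, p x < p y ↔ (π ∘ ![a,b,c]) x < (π ∘ ![a,b,c]) y) :
    ∀ x y : Fin 3, p x < p y ↔ π (![a,b,c] x) < π (![a,b,c] y) := H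

lemma cover {m : ℕ} {π : Fin (m+2) → Fin (m+2)} (h : π ∈ TSS132 (m+2)) :
    π (Fin.last (m+1)) = Fin.last (m+1) ∨ π 0 = Fin.last (m+1) ∨
      (π 0 = (Fin.last m).castSucc ∧ π 1 = Fin.last (m+1)) := by
  obtain ⟨hb, h132, h2341, h3241⟩ := h
  obtain ⟨k, hk⟩ := hb.2 (Fin.last (m+1))
  have hlt : ∀ j, j ≠ k → (π j).val < m + 1 := by
    intro j hj
    have hne : π j ≠ Fin.last (m+1) := fun hh => hj (hb.1 (hh.trans hk.symm))
    have h1 := (π j).isLt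
    have h2 : (π j).val ≠ m + 1 := fun hh => hne (Fin.ext (by simpa using hh))
    omega
  by_cases hkl : k = Fin.last (m+1)
  · left; exact hkl ▸ hk
  by_cases hk0 : k = 0
  · right; left; exact hk0 ▸ hk
  right; right
  have hkv1 : 1 ≤ k.val := by
    rcases Nat.eq_zero_or_pos k.val with h0 | h0
    · exact absurd (Fin.ext (by simpa using h0)) hk0
    · exact h0
  have hkvl : k.val < m + 1 := by
    have h1 := k.isLt
    have h2 : k.val ≠ m + 1 := fun hh => hkl (Fin.ext (by simpa using hh))
    omega
  have key : ∀ i j : Fin (m+2), i < k → k < j → (π j).val < (π i).val := by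
    intro i j hik hkj
    by_contra hcon
    have hij : i < j := hik.trans hkj
    have hne : (π i).val ≠ (π j).val := fun hh => (lt_irrefl j)
      (by rw [hb.1 (Fin.ext hh)] at hij; exact hij)
    have hij' : (π i).val < (π j).val := by omega
    have hjk' : (π j).val < (π k).val := by rw [hk]; exact hlt j (Fin.ne_of_gt hkj)
    have hik' : (π i).val < (π k).val := by omega
    refine h132 ⟨![i, k, j], sm3 hik hkj, ?_⟩
    intro x y
    have e2 : (⟨2, by omega⟩ : Fin 3) = 2 := rfl
    fin_cases x <;> fin_cases y <;>
      simp only [e2, Matrix.cons_val_zero, Matrix.cons_val_one, Matrix.head_cons,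
        Matrix.cons_val_two, Matrix.tail_cons, Fin.lt_def, Fin.mk_zero, Fin.mk_one] <;>
      omega
  have hval1 : ((1 : Fin (m+2))).val = 1 := rfl
  by_cases hk1 : k = 1
  · subst hk1
    refine ⟨?_, hk⟩
    by_contra hcon
    obtain ⟨j0, hj0⟩ := hb.2 ((Fin.last m).castSucc)
    have hj00 : j0 ≠ 0 := fun hh => hcon (hh ▸ hj0)
    have hj01 : j0 ≠ 1 := by
      intro hh
      rw [hh, hk] at hj0
      have := congrArg Fin.val hj0
      simp at this
    have hj0v : 2 ≤ j0.val := by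
      have v0 : j0.val ≠ 0 := fun hh => hj00 (Fin.ext (by simpa using hh))
      have v1 : j0.val ≠ 1 := fun hh => hj01 (Fin.ext (by simpa using hh))
      omega
    have h0ne1 : (0 : Fin (m+2)) ≠ 1 := by
      intro hh
      have := congrArg Fin.val hh
      simp [hval1] at this
    have hπ0lt : (π 0).val < m + 1 := hlt 0 h0ne1
    have hπ0ne : (π 0).val ≠ m := fun hh => hcon (Fin.ext (by simpa using hh))
    have f1 : (π 0).val < (π j0).val := by
      rw [hj0]; simp; omega
    have f2 : (π j0).val < (π 1).val := by
      rw [hk, hj0]; simp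
    have s1 : (0 : Fin (m+2)) < 1 := by rw [Fin.lt_def, hval1]; simp
    have s2 : (1 : Fin (m+2)) < j0 := by rw [Fin.lt_def, hval1]; omega
    refine h132 ⟨![0, 1, j0], sm3 s1 s2, ?_⟩
    intro x y
    have e2 : (⟨2, by omega⟩ : Fin 3) = 2 := rfl
    fin_cases x <;> fin_cases y <;>
      simp only [e2, Matrix.cons_val_zero, Matrix.cons_val_one, Matrix.head_cons,
        Matrix.cons_val_two, Matrix.tail_cons, Fin.lt_def, Fin.mk_zero, Fin.mk_one] <;>
      omega
  · exfalso
    have hkv2 : 2 ≤ k.val := by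
      have : k.val ≠ 1 := fun hh => hk1 (Fin.ext (by simpa [hval1] using hh))
      omega
    have h01 : (0 : Fin (m+2)) < 1 := by rw [Fin.lt_def, hval1]; simp
    have h1k : (1 : Fin (m+2)) < k := by rw [Fin.lt_def, hval1]; omega
    have hklast : k < Fin.last (m+1) := by rw [Fin.lt_def]; simpa using hkvl
    have hv0 : (π (Fin.last (m+1))).val < (π 0).val := key 0 _ (h01.trans h1k) hklast
    have hv1 : (π (Fin.last (m+1))).val < (π 1).val := key 1 _ h1k hklast
    have hv0k : (π 0).val < (π k).val := by rw [hk]; exact hlt 0 (Fin.ne_of_lt (h01.trans h1k))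
    have hv1k : (π 1).val < (π k).val := by rw [hk]; exact hlt 1 (Fin.ne_of_lt h1k)
    have hne01 : (π 0).val ≠ (π 1).val := by
      intro hh
      have := congrArg Fin.val (hb.1 (Fin.ext hh))
      simp [hval1] at this
    have e2 : (⟨2, by omega⟩ : Fin 4) = 2 := rfl
    have e3 : (⟨3, by omega⟩ : Fin 4) = 3 := rfl
    rcases Nat.lt_or_ge (π 0).val (π 1).val with hlt01 | hge
    · refine h2341 ⟨![0, 1, k, Fin.last (m+1)], sm4 h01 h1k hklast, ?_⟩
      intro x y
      fin_cases x <;> fin_cases y <;>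
        simp only [e2, e3, Matrix.cons_val_zero, Matrix.cons_val_one, Matrix.head_cons,
          Matrix.cons_val_two, Matrix.tail_cons, Matrix.cons_val_three, Fin.lt_def,
          Fin.mk_zero, Fin.mk_one] <;>
        omega
    · have hgt : (π 1).val < (π 0).val := by omega
      refine h3241 ⟨![0, 1, k, Fin.last (m+1)], sm4 h01 h1k hklast, ?_⟩
      intro x y
      fin_cases x <;> fin_cases y <;>
        simp only [e2, e3, Matrix.cons_val_zero, Matrix.cons_val_one, Matrix.head_cons,
          Matrix.cons_val_two, Matrix.tail_cons, Matrix.cons_val_three, Fin.lt_def,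
          Fin.mk_zero, Fin.mk_one] <;>
        omega

lemma endExt_injective {n : ℕ} : Function.Injective (endExt (n := n)) := by
  intro a b h
  funext i
  have := congrFun h i.castSucc
  rw [endExt_castSucc, endExt_castSucc] at this
  exact Fin.castSucc_injective _ this

lemma frontExt_injective {n : ℕ} : Function.Injective (frontExt (n := n)) := by
  intro a b h
  funext i
  have := congrFun h i.succ
  rw [frontExt_succ, frontExt_succ] at this
  exact Fin.castSucc_injective _ this

lemma pairExt_injective {n : ℕ} : Function.Injective (pairExt (n := n)) := by
  intro a b h
  funext i
  have := congrFun h i.succ.succ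
  rw [pairExt_ss, pairExt_ss] at this
  have := congrArg Fin.val this
  exact Fin.ext (by simpa using this)

lemma card_setA (n : ℕ) :
    Nat.card ↥{π' ∈ TSS132 (n+1) | π' (Fin.last n) = Fin.last n} = Nat.card ↥(TSS132 n) := by
  rw [Nat.card_coe_set_eq, Nat.card_coe_set_eq, setA_eq,
    Set.ncard_image_of_injective _ endExt_injective]

lemma card_setB (n : ℕ) :
    Nat.card ↥{π' ∈ TSS132 (n+1) | π' 0 = Fin.last n} = Nat.card ↥(TSS132 n) := by
  rw [Nat.card_coe_set_eq, Nat.card_coe_set_eq, setB_eq,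
    Set.ncard_image_of_injective _ frontExt_injective]

lemma card_setC (n : ℕ) :
    Nat.card ↥{π' ∈ TSS132 (n+2) | π' 0 = (Fin.last n).castSucc ∧ π' 1 = Fin.last (n+1)} =
      Nat.card ↥(TSS132 n) := by
  rw [Nat.card_coe_set_eq, Nat.card_coe_set_eq, setC_eq,
    Set.ncard_image_of_injective _ pairExt_injective]

lemma card_step (m : ℕ) :
    Nat.card ↥(TSS132 (m+3)) =
      2 * Nat.card ↥(TSS132 (m+2)) + Nat.card ↥(TSS132 (m+1)) := by
  classical
  set A : Set (Fin (m+3) → Fin (m+3)) :=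
    {π' ∈ TSS132 (m+3) | π' (Fin.last (m+2)) = Fin.last (m+2)} with hA
  set B : Set (Fin (m+3) → Fin (m+3)) :=
    {π' ∈ TSS132 (m+3) | π' 0 = Fin.last (m+2)} with hB
  set C : Set (Fin (m+3) → Fin (m+3)) :=
    {π' ∈ TSS132 (m+3) | π' 0 = (Fin.last (m+1)).castSucc ∧ π' 1 = Fin.last (m+2)} with hC
  have hcover : TSS132 (m+3) = A ∪ (B ∪ C) := by
    ext π
    constructor
    · intro hπ
      rcases cover (m := m+1) hπ with h | h | h
      · exact Or.inl ⟨hπ, h⟩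
      · exact Or.inr (Or.inl ⟨hπ, h⟩)
      · exact Or.inr (Or.inr ⟨hπ, h⟩)
    · rintro (h | h | h) <;> exact h.1
  have hval1 : ((1 : Fin (m+3))).val = 1 := rfl
  have hAB : Disjoint A B := by
    rw [Set.disjoint_left]
    rintro π ⟨hm, hl⟩ ⟨_, h0⟩
    have := congrArg Fin.val (hm.1.1 (hl.trans h0.symm))
    simp at this
  have hAC : Disjoint A C := by
    rw [Set.disjoint_left]
    rintro π ⟨hm, hl⟩ ⟨_, _, h1⟩
    have := congrArg Fin.val (hm.1.1 (hl.trans h1.symm))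
    simp [hval1] at this
  have hBC : Disjoint B C := by
    rw [Set.disjoint_left]
    rintro π ⟨hm, h0⟩ ⟨_, h0', _⟩
    have := congrArg Fin.val (h0.symm.trans h0')
    simp at this
  have hcard : Nat.card ↥(TSS132 (m+3)) = A.ncard + (B.ncard + C.ncard) := by
    rw [Nat.card_coe_set_eq, hcover,
      Set.ncard_union_eq (by exact Disjoint.union_right hAB hAC) (Set.toFinite _) (Set.toFinite _),
      Set.ncard_union_eq hBC (Set.toFinite _) (Set.toFinite _)]
  rw [hcard]
  have h1 : A.ncard = Nat.card ↥(TSS132 (m+2)) := by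
    rw [← Nat.card_coe_set_eq]; exact card_setA (m+2)
  have h2 : B.ncard = Nat.card ↥(TSS132 (m+2)) := by
    rw [← Nat.card_coe_set_eq]; exact card_setB (m+2)
  have h3 : C.ncard = Nat.card ↥(TSS132 (m+1)) := by
    rw [← Nat.card_coe_set_eq]; exact card_setC (m+1)
  rw [h1, h2, h3]; ring

lemma avoids_of_short {n k : ℕ} (π : Fin n → Fin n) (p : Fin k → ℕ) (h : n < k) :
    Avoids π p := by
  rintro ⟨f, hf, -⟩
  have := Fintype.card_le_of_injective f hf.injective
  simp at this
  omega

lemma tss_eq_bij_one : TSS132 1 = {π | Function.Bijective π} := by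
  ext π
  simp only [TSS132, Set.mem_setOf_eq, Set.mem_sep_iff]
  exact ⟨fun h => h.1, fun h => ⟨h, avoids_of_short _ _ (by norm_num),
    avoids_of_short _ _ (by norm_num), avoids_of_short _ _ (by norm_num)⟩⟩

lemma tss_eq_bij_two : TSS132 2 = {π | Function.Bijective π} := by
  ext π
  simp only [TSS132, Set.mem_setOf_eq, Set.mem_sep_iff]
  exact ⟨fun h => h.1, fun h => ⟨h, avoids_of_short _ _ (by norm_num),
    avoids_of_short _ _ (by norm_num), avoids_of_short _ _ (by norm_num)⟩⟩

lemma card_bij (n : ℕ) :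
    Nat.card ↥{π : Fin n → Fin n | Function.Bijective π} = Nat.factorial n := by
  have e : ↥{π : Fin n → Fin n | Function.Bijective π} ≃ (Fin n ≃ Fin n) :=
    { toFun := fun x => Equiv.ofBijective x.1 x.2
      invFun := fun e => ⟨e, e.bijective⟩
      left_inv := fun x => Subtype.ext rfl
      right_inv := fun e => Equiv.ext fun x => rfl }
  rw [Nat.card_congr e, Nat.card_eq_fintype_card, Fintype.card_equiv (Equiv.refl _),
    Fintype.card_fin]

lemma cardT : ∀ m : ℕ, Nat.card ↥(TSS132 (m+1)) = pell (m+1) := by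
  intro m
  induction m using Nat.twoStepInduction with
  | zero =>
    rw [tss_eq_bij_one, card_bij]
    rfl
  | one =>
    rw [tss_eq_bij_two, card_bij]
    rfl
  | more m ih1 ih2 =>
    show Nat.card ↥(TSS132 (m+3)) = pell (m+3)
    rw [card_step m, ih1, ih2]
    rfl

lemma rlmax {n : ℕ} {π : Fin (n+1) → Fin (n+1)} (hb : Function.Bijective π) :
    Nat.card {i : Fin (n+1) // ∀ j, i < j → π j < π i} = 1 ↔
      π (Fin.last n) = Fin.last n := by
  have hlastP : ∀ j : Fin (n+1), Fin.last n < j → π j < π (Fin.last n) :=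
    fun j hj => absurd hj (Fin.not_lt.mpr (Fin.le_last j))
  constructor
  · intro h1
    by_contra hne
    obtain ⟨k, hk⟩ := hb.2 (Fin.last n)
    have hkne : k ≠ Fin.last n := fun hh => hne (hh ▸ hk)
    have hklt : ∀ j, k < j → π j < π k := by
      intro j hj
      rw [hk]
      have hjne : π j ≠ Fin.last n := fun hh => (ne_of_gt hj) (hb.1 (hh.trans hk.symm))
      exact lt_of_le_of_ne (Fin.le_last _) hjne
    have hs := (Nat.card_eq_one_iff_unique.mp h1).1
    have heq : (⟨k, hklt⟩ : {i : Fin (n+1) // ∀ j, i < j → π j < π i}) = ⟨Fin.last n, hlastP⟩ :=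
      Subsingleton.elim _ _
    exact hkne (congrArg Subtype.val heq)
  · intro hl
    have huniq : ∀ i : Fin (n+1), (∀ j, i < j → π j < π i) → i = Fin.last n := by
      intro i hi
      by_contra hne
      have hilt : i < Fin.last n := lt_of_le_of_ne (Fin.le_last i) hne
      have := hi (Fin.last n) hilt
      rw [hl] at this
      exact absurd this (Fin.not_lt.mpr (Fin.le_last _))
    rw [Nat.card_eq_one_iff_unique]
    refine ⟨⟨fun a b => Subtype.ext ((huniq a.1 a.2).trans (huniq b.1 b.2).symm)⟩,
      ⟨⟨Fin.last n, hlastP⟩⟩⟩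

end TSSaux

open TSSaux in
theorem stmt_16 (n : ℕ) (hn : 2 ≤ n) :
    Nat.card ↥{π ∈ TSS132 n | Nat.card {i : Fin n // ∀ j, i < j → π j < π i} = 1} =
      pell (n-1) := by
  obtain ⟨m, rfl⟩ : ∃ m, n = m + 2 := ⟨n - 2, by omega⟩
  have hset : {π ∈ TSS132 (m+2) | Nat.card {i : Fin (m+2) // ∀ j, i < j → π j < π i} = 1} =
      {π' ∈ TSS132 (m+2) | π' (Fin.last (m+1)) = Fin.last (m+1)} := by
    ext π
    exact ⟨fun ⟨hm, hc⟩ => ⟨hm, (rlmax hm.1).mp hc⟩,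
      fun ⟨hm, hc⟩ => ⟨hm, (rlmax hm.1).mpr hc⟩⟩
  rw [hset, card_setA (m+1), cardT m]
  congr 1
end

section
/- For all n ≥ 4, the number of permutations of {1,...,n} avoiding 132, 2341, and 3241 that have exactly two right-to-left maxima equals p_{n-2} + p_{n-3}, where p_k is the k-th Pell number. -/
/-- append a new maximum at the end -/
def appEnd {m : ℕ} (C : Fin m → Fin m) : Fin (m+1) → Fin (m+1) :=
  fun i => if h : (i : ℕ) < m then Fin.castLE (by omega) (C ⟨i, h⟩) else Fin.last m

/-- prepend a new maximum at the front -/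
def preTop {m : ℕ} (C : Fin m → Fin m) : Fin (m+1) → Fin (m+1) :=
  fun i => if h : (i : ℕ) = 0 then Fin.last m
    else Fin.castLE (by omega) (C ⟨(i : ℕ) - 1, by omega⟩)

/-- prepend (second-max, max) at the front -/
def preTwo {m : ℕ} (C : Fin m → Fin m) : Fin (m+2) → Fin (m+2) :=
  fun i => if h0 : (i : ℕ) = 0 then ⟨m, by omega⟩
    else if h1 : (i : ℕ) = 1 then Fin.last (m+1)
    else Fin.castLE (by omega) (C ⟨(i : ℕ) - 2, by omega⟩)

lemma appEnd_val_lt {m : ℕ} (C : Fin m → Fin m) (i : Fin (m+1)) (h : (i : ℕ) < m) :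
    (appEnd C i : ℕ) = (C ⟨i, h⟩ : ℕ) := by simp [appEnd, h]

lemma appEnd_val_top {m : ℕ} (C : Fin m → Fin m) (i : Fin (m+1)) (h : ¬ (i : ℕ) < m) :
    (appEnd C i : ℕ) = m := by simp [appEnd, h]

lemma preTop_val_zero {m : ℕ} (C : Fin m → Fin m) (i : Fin (m+1)) (h : (i : ℕ) = 0) :
    (preTop C i : ℕ) = m := by simp [preTop, h]

lemma preTop_val_pos {m : ℕ} (C : Fin m → Fin m) (i : Fin (m+1)) (h : ¬ (i : ℕ) = 0) :
    (preTop C i : ℕ) = (C ⟨(i : ℕ) - 1, by omega⟩ : ℕ) := by simp [preTop, h]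

lemma preTwo_val_zero {m : ℕ} (C : Fin m → Fin m) (i : Fin (m+2)) (h : (i : ℕ) = 0) :
    (preTwo C i : ℕ) = m := by simp [preTwo, h]

lemma preTwo_val_one {m : ℕ} (C : Fin m → Fin m) (i : Fin (m+2)) (h : (i : ℕ) = 1) :
    (preTwo C i : ℕ) = m + 1 := by simp [preTwo, h]

lemma preTwo_val_big {m : ℕ} (C : Fin m → Fin m) (i : Fin (m+2))
    (h0 : ¬ (i : ℕ) = 0) (h1 : ¬ (i : ℕ) = 1) :
    (preTwo C i : ℕ) = (C ⟨(i : ℕ) - 2, by omega⟩ : ℕ) := by simp [preTwo, h0, h1]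


/-- generic forward transfer of an occurrence along an order-embedding of positions -/
lemma contains_of_map {n N k : ℕ} {π : Fin N → Fin N} {C : Fin n → Fin n} {p : Fin k → ℕ}
    (ρ : Fin n → Fin N) (hρ : StrictMono ρ)
    (hval : ∀ i j, C i < C j ↔ π (ρ i) < π (ρ j)) :
    Contains C p → Contains π p := by
  rintro ⟨f, hf, hiff⟩
  exact ⟨ρ ∘ f, hρ.comp hf, fun i j => (hiff i j).trans (hval _ _)⟩

lemma contains_appEnd_of {m k : ℕ} {C : Fin m → Fin m} {p : Fin k → ℕ} :
    Contains C p → Contains (appEnd C) p := by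
  refine contains_of_map (fun i => ⟨(i : ℕ), by omega⟩) ?_ ?_
  · intro a b hab
    simp only [Fin.lt_def] at *
    exact hab
  · intro i j
    have h1 : ((⟨(i : ℕ), by omega⟩ : Fin (m+1)) : ℕ) < m := i.isLt
    have h2 : ((⟨(j : ℕ), by omega⟩ : Fin (m+1)) : ℕ) < m := j.isLt
    rw [Fin.lt_def, Fin.lt_def, appEnd_val_lt C _ h1, appEnd_val_lt C _ h2]

lemma contains_preTop_of {m k : ℕ} {C : Fin m → Fin m} {p : Fin k → ℕ} :
    Contains C p → Contains (preTop C) p := by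
  refine contains_of_map (fun i => ⟨(i : ℕ) + 1, by omega⟩) ?_ ?_
  · intro a b hab
    simp only [Fin.lt_def] at *
    omega
  · intro i j
    rw [Fin.lt_def, Fin.lt_def,
      preTop_val_pos C ⟨(i:ℕ)+1, by omega⟩ (by show ¬ ((i:ℕ)+1 = 0); omega),
      preTop_val_pos C ⟨(j:ℕ)+1, by omega⟩ (by show ¬ ((j:ℕ)+1 = 0); omega)]
    simp

lemma contains_preTwo_of {m k : ℕ} {C : Fin m → Fin m} {p : Fin k → ℕ} :
    Contains C p → Contains (preTwo C) p := by
  refine contains_of_map (fun i => ⟨(i : ℕ) + 2, by omega⟩) ?_ ?_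
  · intro a b hab
    simp only [Fin.lt_def] at *
    omega
  · intro i j
    rw [Fin.lt_def, Fin.lt_def,
      preTwo_val_big C ⟨(i:ℕ)+2, by omega⟩ (by show ¬ ((i:ℕ)+2 = 0); omega)
        (by show ¬ ((i:ℕ)+2 = 1); omega),
      preTwo_val_big C ⟨(j:ℕ)+2, by omega⟩ (by show ¬ ((j:ℕ)+2 = 0); omega)
        (by show ¬ ((j:ℕ)+2 = 1); omega)]
    simp

lemma contains_appEnd_rev {m k : ℕ} {C : Fin m → Fin m} {p : Fin (k+1) → ℕ}
    (hp : ∃ j, p (Fin.last k) < p j) :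
    Contains (appEnd C) p → Contains C p := by
  rintro ⟨f, hf, hiff⟩
  have hall : ∀ t, (f t : ℕ) < m := by
    intro t
    by_contra h
    have ht : t = Fin.last k := by
      by_contra ht
      have h1 : t < Fin.last k := Fin.lt_last_iff_ne_last.mpr ht
      have h2 := hf h1
      rw [Fin.lt_def] at h2
      have := (f (Fin.last k)).isLt
      omega
    obtain ⟨j, hj⟩ := hp
    have hx := (hiff _ j).mp (ht ▸ hj)
    rw [Fin.lt_def, appEnd_val_top C _ h] at hx
    have hy := (appEnd C (f j)).isLt
    omega
  refine ⟨fun t => ⟨f t, hall t⟩, ?_, ?_⟩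
  · intro a b hab
    have := hf hab
    simp only [Fin.lt_def] at *
    exact this
  · intro i j
    rw [hiff i j, Fin.lt_def, Fin.lt_def,
      appEnd_val_lt C (f i) (hall i), appEnd_val_lt C (f j) (hall j)]

lemma contains_preTop_rev {m k : ℕ} {C : Fin m → Fin m} {p : Fin (k+1) → ℕ}
    (hp : ∃ j, p 0 < p j) :
    Contains (preTop C) p → Contains C p := by
  rintro ⟨f, hf, hiff⟩
  have hall : ∀ t, 1 ≤ (f t : ℕ) := by
    intro t
    by_contra h
    have ht0 : (f t : ℕ) = 0 := by omega
    have ht : t = 0 := by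
      by_contra ht
      have h1 : (0 : Fin (k+1)) < t := Fin.pos_of_ne_zero ht
      have h2 := hf h1
      rw [Fin.lt_def] at h2
      omega
    subst ht
    obtain ⟨j, hj⟩ := hp
    have hx := (hiff 0 j).mp hj
    rw [Fin.lt_def, preTop_val_zero C (f 0) ht0] at hx
    have hy := (preTop C (f j)).isLt
    omega
  refine ⟨fun t => ⟨(f t : ℕ) - 1, by have h1 := (f t).isLt; have h2 := hall t; omega⟩, ?_, ?_⟩
  · intro a b hab
    have := hf hab
    have h1 := hall a
    simp only [Fin.lt_def] at *
    omega
  · intro i j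
    rw [hiff i j, Fin.lt_def, Fin.lt_def,
      preTop_val_pos C (f i) (by have := hall i; omega),
      preTop_val_pos C (f j) (by have := hall j; omega)]

lemma contains_preTwo_rev {m k : ℕ} {C : Fin m → Fin m} {p : Fin (k+3) → ℕ}
    (hp : p 0 < p 2) :
    Contains (preTwo C) p → Contains C p := by
  rintro ⟨f, hf, hiff⟩
  have h01 : (0 : Fin (k+3)) < 1 := by rw [Fin.lt_def]; simp
  have h12 : (1 : Fin (k+3)) < 2 := by rw [Fin.lt_def]; simp [Nat.mod_eq_of_lt (show 2 < k+3 by omega)]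
  have hv01 : (f 0 : ℕ) < (f 1 : ℕ) := by have := hf h01; rwa [Fin.lt_def] at this
  have hv12 : (f 1 : ℕ) < (f 2 : ℕ) := by have := hf h12; rwa [Fin.lt_def] at this
  have hiff02 := (hiff 0 2).mp hp
  rw [Fin.lt_def] at hiff02
  have hall : ∀ t, 2 ≤ (f t : ℕ) := by
    intro t
    by_contra h
    -- f t is 0 or 1, so t is 0 or 1; in all cases we contradict hiff02
    have h2big : 2 ≤ (f 2 : ℕ) ∨ (f 2 : ℕ) ≤ 1 := by omega
    have hf2 : 2 ≤ (f 2 : ℕ) := by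
      rcases Fin.lt_or_le t 2 with h' | h'
      · omega
      · -- t ≥ 2 : f 2 ≤ f t < 2, but f 0 < f 1 < f 2 forces f 2 ≥ 2, contradiction
        have : (f 2 : ℕ) ≤ (f t : ℕ) := by
          rcases eq_or_lt_of_le h' with rfl | h''
          · omega
          · have := hf h''; rw [Fin.lt_def] at this; omega
        omega
    -- so t = 0 or t = 1 (positions), with f t ≤ 1
    rcases Nat.lt_or_ge (t : ℕ) 2 with ht2 | ht2
    · -- t index 0 or 1
      have hft : (f t : ℕ) ≤ 1 := by omega
      rcases Nat.eq_or_lt_of_le (Nat.zero_le (t : ℕ)) with ht0 | ht1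
      · -- t = 0
        have ht : t = 0 := Fin.ext ht0.symm
        subst ht
        rcases Nat.eq_or_lt_of_le hft with hf1 | hf0
        · -- f 0 = 1 : π (f 0) = max, contradicting hiff02 (π (f 0) < π (f 2))
          rw [preTwo_val_one C _ hf1] at hiff02
          have := (preTwo C (f 2)).isLt
          omega
        · -- f 0 = 0 : π (f 0) = m (second max), but π (f 2) is a C-value < m
          have hf0' : (f 0 : ℕ) = 0 := by omega
          rw [preTwo_val_zero C _ hf0'] at hiff02
          rw [preTwo_val_big C _ (by omega) (by omega)] at hiff02
          have := (C ⟨(f 2 : ℕ) - 2, by omega⟩).isLt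
          omega
      · -- t = 1, so f 1 ≤ 1, hence f 0 = 0, f 1 = 1
        have hft1 : (t : ℕ) = 1 := by omega
        have ht : t = 1 := Fin.ext hft1
        subst ht
        have hf1v : (f 1 : ℕ) = 1 := by omega
        have hf0v : (f 0 : ℕ) = 0 := by omega
        rw [preTwo_val_zero C _ hf0v] at hiff02
        rw [preTwo_val_big C _ (by omega) (by omega)] at hiff02
        have := (C ⟨(f 2 : ℕ) - 2, by omega⟩).isLt
        omega
    · -- t ≥ 2 : then f t ≥ f 1 > f 0 ≥ 0 ... f t ≥ 2 since f 0 < f 1 < f t... contradiction with h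
      have : (f 1 : ℕ) < (f t : ℕ) := by
        rcases Nat.eq_or_lt_of_le ht2 with he | hlt
        · have : t = 2 := Fin.ext he.symm
          subst this; omega
        · have h2t : (2 : Fin (k+3)) < t := by rw [Fin.lt_def]; simpa [Nat.mod_eq_of_lt (show 2 < k+3 by omega)] using hlt
          have := hf h2t; rw [Fin.lt_def] at this; omega
      omega
  refine ⟨fun t => ⟨(f t : ℕ) - 2, by have h1 := (f t).isLt; have h2 := hall t; omega⟩, ?_, ?_⟩
  · intro a b hab
    have := hf hab
    have h1 := hall a
    simp only [Fin.lt_def] at *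
    omega
  · intro i j
    rw [hiff i j, Fin.lt_def, Fin.lt_def,
      preTwo_val_big C (f i) (by have := hall i; omega) (by have := hall i; omega),
      preTwo_val_big C (f j) (by have := hall j; omega) (by have := hall j; omega)]

lemma appEnd_bij {m : ℕ} {C : Fin m → Fin m} (hC : Function.Bijective C) :
    Function.Bijective (appEnd C) := by
  rw [Finite.injective_iff_bijective.symm]
  intro i j hij
  have hij' : (appEnd C i : ℕ) = (appEnd C j : ℕ) := by rw [hij]
  by_cases hi : (i : ℕ) < m <;> by_cases hj : (j : ℕ) < m
  · rw [appEnd_val_lt C i hi, appEnd_val_lt C j hj] at hij'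
    have := hC.injective (Fin.ext hij' : C ⟨i, hi⟩ = C ⟨j, hj⟩)
    have := congrArg Fin.val this
    exact Fin.ext (by simpa using this)
  · rw [appEnd_val_lt C i hi, appEnd_val_top C j hj] at hij'
    exact absurd hij' (by have := (C ⟨i, hi⟩).isLt; omega)
  · rw [appEnd_val_top C i hi, appEnd_val_lt C j hj] at hij'
    exact absurd hij'.symm (by have := (C ⟨j, hj⟩).isLt; omega)
  · exact Fin.ext (by omega)

lemma preTop_bij {m : ℕ} {C : Fin m → Fin m} (hC : Function.Bijective C) :
    Function.Bijective (preTop C) := by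
  rw [Finite.injective_iff_bijective.symm]
  intro i j hij
  have hij' : (preTop C i : ℕ) = (preTop C j : ℕ) := by rw [hij]
  by_cases hi : (i : ℕ) = 0 <;> by_cases hj : (j : ℕ) = 0
  · exact Fin.ext (by omega)
  · rw [preTop_val_zero C i hi, preTop_val_pos C j hj] at hij'
    exact absurd hij'.symm (by have := (C ⟨(j:ℕ)-1, by omega⟩).isLt; omega)
  · rw [preTop_val_pos C i hi, preTop_val_zero C j hj] at hij'
    exact absurd hij' (by have := (C ⟨(i:ℕ)-1, by omega⟩).isLt; omega)
  · rw [preTop_val_pos C i hi, preTop_val_pos C j hj] at hij'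
    have := hC.injective (Fin.ext hij' :
      C ⟨(i:ℕ)-1, by omega⟩ = C ⟨(j:ℕ)-1, by omega⟩)
    have := congrArg Fin.val this
    simp only at this
    exact Fin.ext (by omega)

lemma preTwo_bij {m : ℕ} {C : Fin m → Fin m} (hC : Function.Bijective C) :
    Function.Bijective (preTwo C) := by
  rw [Finite.injective_iff_bijective.symm]
  intro i j hij
  have hij' : (preTwo C i : ℕ) = (preTwo C j : ℕ) := by rw [hij]
  by_cases hi0 : (i : ℕ) = 0 <;> by_cases hj0 : (j : ℕ) = 0 <;>
    by_cases hi1 : (i : ℕ) = 1 <;> by_cases hj1 : (j : ℕ) = 1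
  all_goals first
  | (exact Fin.ext (by omega))
  | (rw [preTwo_val_zero C i hi0, preTwo_val_one C j hj1] at hij'; omega)
  | (rw [preTwo_val_one C i hi1, preTwo_val_zero C j hj0] at hij'; omega)
  | (rw [preTwo_val_zero C i hi0, preTwo_val_big C j hj0 hj1] at hij'
     exact absurd hij'.symm (by have := (C ⟨(j:ℕ)-2, by omega⟩).isLt; omega))
  | (rw [preTwo_val_big C i hi0 hi1, preTwo_val_zero C j hj0] at hij'
     exact absurd hij' (by have := (C ⟨(i:ℕ)-2, by omega⟩).isLt; omega))
  | (rw [preTwo_val_one C i hi1, preTwo_val_big C j hj0 hj1] at hij'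
     exact absurd hij'.symm (by have := (C ⟨(j:ℕ)-2, by omega⟩).isLt; omega))
  | (rw [preTwo_val_big C i hi0 hi1, preTwo_val_one C j hj1] at hij'
     exact absurd hij' (by have := (C ⟨(i:ℕ)-2, by omega⟩).isLt; omega))
  | (rw [preTwo_val_big C i hi0 hi1, preTwo_val_big C j hj0 hj1] at hij'
     have h2 := congrArg Fin.val (hC.injective (Fin.ext hij' :
       C ⟨(i:ℕ)-2, by omega⟩ = C ⟨(j:ℕ)-2, by omega⟩))
     simp only at h2
     exact Fin.ext (by omega))

lemma appEnd_recon {m : ℕ} {π : Fin (m+1) → Fin (m+1)} (hbij : Function.Bijective π)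
    (hl : (π (Fin.last m) : ℕ) = m) :
    ∃ C : Fin m → Fin m, Function.Bijective C ∧ π = appEnd C := by
  have hlt : ∀ i : Fin m, (π (Fin.castSucc i) : ℕ) < m := by
    intro i
    have hne : π (Fin.castSucc i) ≠ π (Fin.last m) := by
      intro h
      have := hbij.injective h
      have := congrArg Fin.val this
      simp only [Fin.coe_castSucc, Fin.val_last] at this
      omega
    have h2 : (π (Fin.castSucc i) : ℕ) ≠ m := fun h =>
      hne (Fin.ext (by rw [h, hl]))
    have := (π (Fin.castSucc i)).isLt
    omega
  refine ⟨fun i => ⟨π (Fin.castSucc i), hlt i⟩, ?_, ?_⟩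
  · rw [Finite.injective_iff_bijective.symm]
    intro i j hij
    have := congrArg Fin.val hij
    simp only at this
    have := hbij.injective (Fin.ext this : π (Fin.castSucc i) = π (Fin.castSucc j))
    exact Fin.castSucc_injective m this
  · funext i
    by_cases h : (i : ℕ) < m
    · refine Fin.ext ?_
      rw [appEnd_val_lt _ i h]
      show _ = ((π (Fin.castSucc ⟨i, h⟩) : ℕ))
      congr 1
    · refine Fin.ext ?_
      rw [appEnd_val_top _ i h]
      have : i = Fin.last m := Fin.ext (by have := i.isLt; simp; omega)
      rw [this, hl]

lemma preTop_recon {m : ℕ} {π : Fin (m+1) → Fin (m+1)} (hbij : Function.Bijective π)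
    (hl : (π 0 : ℕ) = m) :
    ∃ C : Fin m → Fin m, Function.Bijective C ∧ π = preTop C := by
  have hlt : ∀ i : Fin m, (π (Fin.succ i) : ℕ) < m := by
    intro i
    have hne : π (Fin.succ i) ≠ π 0 := by
      intro h
      have := congrArg Fin.val (hbij.injective h)
      simp only [Fin.val_succ, Fin.val_zero] at this
      omega
    have h2 : (π (Fin.succ i) : ℕ) ≠ m := fun h => hne (Fin.ext (by rw [h, hl]))
    have := (π (Fin.succ i)).isLt
    omega
  refine ⟨fun i => ⟨π (Fin.succ i), hlt i⟩, ?_, ?_⟩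
  · rw [Finite.injective_iff_bijective.symm]
    intro i j hij
    have := congrArg Fin.val hij
    simp only at this
    have := hbij.injective (Fin.ext this : π (Fin.succ i) = π (Fin.succ j))
    exact Fin.succ_injective m this
  · funext i
    by_cases h : (i : ℕ) = 0
    · refine Fin.ext ?_
      rw [preTop_val_zero _ i h]
      have : i = 0 := Fin.ext (by simpa using h)
      rw [this, hl]
    · refine Fin.ext ?_
      rw [preTop_val_pos _ i h]
      show (π i : ℕ) = (π (Fin.succ ⟨(i:ℕ)-1, by omega⟩) : ℕ)
      congr 2
      exact Fin.ext (by simp [Fin.val_succ]; omega)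

lemma preTwo_recon {m : ℕ} {π : Fin (m+2) → Fin (m+2)} (hbij : Function.Bijective π)
    (h0 : (π 0 : ℕ) = m) (h1 : (π 1 : ℕ) = m + 1) :
    ∃ C : Fin m → Fin m, Function.Bijective C ∧ π = preTwo C := by
  have hlt : ∀ i : Fin m, (π ⟨(i:ℕ)+2, by omega⟩ : ℕ) < m := by
    intro i
    have hne0 : π ⟨(i:ℕ)+2, by omega⟩ ≠ π 0 := by
      intro h
      have := congrArg Fin.val (hbij.injective h)
      simp only [Fin.val_zero] at this
      omega
    have hne1 : π ⟨(i:ℕ)+2, by omega⟩ ≠ π 1 := by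
      intro h
      have := congrArg Fin.val (hbij.injective h)
      simp only [Fin.val_one] at this
      omega
    have g0 : (π ⟨(i:ℕ)+2, by omega⟩ : ℕ) ≠ m := fun h => hne0 (Fin.ext (by rw [h, h0]))
    have g1 : (π ⟨(i:ℕ)+2, by omega⟩ : ℕ) ≠ m+1 := fun h => hne1 (Fin.ext (by rw [h, h1]))
    have := (π ⟨(i:ℕ)+2, by omega⟩).isLt
    omega
  refine ⟨fun i => ⟨π ⟨(i:ℕ)+2, by omega⟩, hlt i⟩, ?_, ?_⟩
  · rw [Finite.injective_iff_bijective.symm]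
    intro i j hij
    have := congrArg Fin.val hij
    simp only at this
    have h2 := hbij.injective (Fin.ext this :
      π ⟨(i:ℕ)+2, by omega⟩ = π ⟨(j:ℕ)+2, by omega⟩)
    have := congrArg Fin.val h2
    simp only at this
    exact Fin.ext (by omega)
  · funext i
    by_cases hc0 : (i : ℕ) = 0
    · refine Fin.ext ?_
      rw [preTwo_val_zero _ i hc0]
      have : i = 0 := Fin.ext (by simpa using hc0)
      rw [this, h0]
    · by_cases hc1 : (i : ℕ) = 1
      · refine Fin.ext ?_
        rw [preTwo_val_one _ i hc1]
        have : i = 1 := Fin.ext (by simpa using hc1)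
        rw [this, h1]
      · refine Fin.ext ?_
        rw [preTwo_val_big _ i hc0 hc1]
        show (π i : ℕ) = (π ⟨(i:ℕ)-2+2, by omega⟩ : ℕ)
        congr 2
        exact Fin.ext (by simp; omega)

lemma appEnd_tss {m : ℕ} {C : Fin m → Fin m} (h : C ∈ TSS132 m) :
    appEnd C ∈ TSS132 (m+1) := by
  obtain ⟨hb, h1, h2, h3⟩ := h
  exact ⟨appEnd_bij hb,
    fun hc => h1 (contains_appEnd_rev (k := 2) (by decide) hc),
    fun hc => h2 (contains_appEnd_rev (k := 3) (by decide) hc),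
    fun hc => h3 (contains_appEnd_rev (k := 3) (by decide) hc)⟩

lemma preTop_tss {m : ℕ} {C : Fin m → Fin m} (h : C ∈ TSS132 m) :
    preTop C ∈ TSS132 (m+1) := by
  obtain ⟨hb, h1, h2, h3⟩ := h
  exact ⟨preTop_bij hb,
    fun hc => h1 (contains_preTop_rev (k := 2) (by decide) hc),
    fun hc => h2 (contains_preTop_rev (k := 3) (by decide) hc),
    fun hc => h3 (contains_preTop_rev (k := 3) (by decide) hc)⟩

lemma preTwo_tss {m : ℕ} {C : Fin m → Fin m} (h : C ∈ TSS132 m) :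
    preTwo C ∈ TSS132 (m+2) := by
  obtain ⟨hb, h1, h2, h3⟩ := h
  exact ⟨preTwo_bij hb,
    fun hc => h1 (contains_preTwo_rev (k := 0) (by decide) hc),
    fun hc => h2 (contains_preTwo_rev (k := 1) (by decide) hc),
    fun hc => h3 (contains_preTwo_rev (k := 1) (by decide) hc)⟩

lemma tss_of_appEnd {m : ℕ} {C : Fin m → Fin m} (hb : Function.Bijective C)
    (h : appEnd C ∈ TSS132 (m+1)) : C ∈ TSS132 m :=
  ⟨hb, fun hc => h.2.1 (contains_appEnd_of hc),
    fun hc => h.2.2.1 (contains_appEnd_of hc),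
    fun hc => h.2.2.2 (contains_appEnd_of hc)⟩

lemma tss_of_preTop {m : ℕ} {C : Fin m → Fin m} (hb : Function.Bijective C)
    (h : preTop C ∈ TSS132 (m+1)) : C ∈ TSS132 m :=
  ⟨hb, fun hc => h.2.1 (contains_preTop_of hc),
    fun hc => h.2.2.1 (contains_preTop_of hc),
    fun hc => h.2.2.2 (contains_preTop_of hc)⟩

lemma tss_of_preTwo {m : ℕ} {C : Fin m → Fin m} (hb : Function.Bijective C)
    (h : preTwo C ∈ TSS132 (m+2)) : C ∈ TSS132 m :=
  ⟨hb, fun hc => h.2.1 (contains_preTwo_of hc),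
    fun hc => h.2.2.1 (contains_preTwo_of hc),
    fun hc => h.2.2.2 (contains_preTwo_of hc)⟩

/-- In an avoider, the entries before the maximum dominate the entries after it. -/
lemma before_max_gt {m : ℕ} {π : Fin m → Fin m} (hπ : π ∈ TSS132 m)
    {i k l : Fin m} (hkval : (π k : ℕ) = m - 1) (hik : i < k) (hkl : k < l) :
    π l < π i := by
  obtain ⟨hbij, h132, _, _⟩ := hπ
  have hm : 0 < m := Fin.pos i
  by_contra hcon
  have hne : π l ≠ π i := fun h => by
    have := hbij.injective h
    subst this
    exact absurd (hik.trans hkl) (lt_irrefl _)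
  have hil : π i < π l := by
    rcases lt_or_ge (π i) (π l) with h | h
    · exact h
    · exact absurd (lt_of_le_of_ne h hne) hcon
  have hik' : (π i : ℕ) < m - 1 := by
    have : π i ≠ π k := fun h => by
      have := hbij.injective h; subst this; exact absurd hik (lt_irrefl _)
    have h1 : (π i : ℕ) ≠ m - 1 := fun h => this (Fin.ext (by rw [h, hkval]))
    have := (π i).isLt; have := (π l).isLt
    rw [Fin.lt_def] at hil
    omega
  have hlk' : (π l : ℕ) < m - 1 := by
    have : π l ≠ π k := fun h => by
      have := hbij.injective h; subst this; exact absurd hkl (lt_irrefl _)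
    have h1 : (π l : ℕ) ≠ m - 1 := fun h => this (Fin.ext (by rw [h, hkval]))
    have := (π l).isLt
    omega
  apply h132
  refine ⟨![i, k, l], ?_, ?_⟩
  · have hmono : ∀ a b : Fin 3, (a:ℕ) < (b:ℕ) →
        ((![i,k,l] a : Fin m) : ℕ) < ((![i,k,l] b : Fin m) : ℕ) := by
      rw [Fin.lt_def] at hik hkl
      simp only [Fin.forall_fin_succ, Fin.forall_fin_one, Matrix.cons_val_zero,
        Matrix.cons_val_succ, Fin.val_zero, Fin.val_succ, IsEmpty.forall_iff, and_true]
      omega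
    intro a b hab
    rw [Fin.lt_def] at hab ⊢
    exact hmono a b hab
  · have hiff : ∀ a b : Fin 3, (![1,3,2] a : ℕ) < ![1,3,2] b ↔
        ((π (![i,k,l] a) : Fin m) : ℕ) < ((π (![i,k,l] b) : Fin m) : ℕ) := by
      rw [Fin.lt_def] at hil
      simp only [Fin.forall_fin_succ, Fin.forall_fin_one, Matrix.cons_val_zero,
        Matrix.cons_val_succ, Fin.val_zero, Fin.val_succ, IsEmpty.forall_iff, and_true]
      omega
    intro a b
    rw [Fin.lt_def]
    exact hiff a b

lemma trichotomy {m : ℕ} {π : Fin (m+3) → Fin (m+3)} (hπ : π ∈ TSS132 (m+3)) :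
    (π (Fin.last (m+2)) : ℕ) = m+2 ∨ (π 0 : ℕ) = m+2 ∨
      ((π 0 : ℕ) = m+1 ∧ (π 1 : ℕ) = m+2) := by
  have hbij := hπ.1
  obtain ⟨k, hk⟩ := hbij.surjective ⟨m+2, by omega⟩
  have hkv : (π k : ℕ) = m+2 := by rw [hk]
  have hkval : (π k : ℕ) = (m+3) - 1 := by omega
  by_cases hkl : (k : ℕ) = m+2
  · left
    have : k = Fin.last (m+2) := Fin.ext (by simpa using hkl)
    rw [← this, hkv]
  by_cases hk0 : (k : ℕ) = 0
  · right; left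
    have : k = 0 := Fin.ext (by simpa using hk0)
    rw [← this, hkv]
  by_cases hk1 : (k : ℕ) = 1
  · right; right
    have hkk : k = 1 := Fin.ext (by simpa using hk1)
    refine ⟨?_, by rw [← hkk, hkv]⟩
    -- π 0 must be the second largest value m+1
    obtain ⟨t, ht⟩ := hbij.surjective ⟨m+1, by omega⟩
    have htv : (π t : ℕ) = m+1 := by rw [ht]
    have htne : t ≠ k := fun h => by rw [h, hkv] at htv; omega
    by_cases ht0 : (t : ℕ) = 0
    · have : t = 0 := Fin.ext (by simpa using ht0)
      rw [← this, htv]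
    · exfalso
      have h0k : (0 : Fin (m+3)) < k := by rw [Fin.lt_def, Fin.val_zero]; omega
      have hkt : k < t := by
        rw [Fin.lt_def]
        have : (t : ℕ) ≠ 1 := fun h => htne (Fin.ext (by omega))
        omega
      have := before_max_gt hπ hkval h0k hkt
      rw [Fin.lt_def, htv] at this
      have hne : π 0 ≠ π k := fun h => by
        have := hbij.injective h
        have := congrArg Fin.val this
        simp at this; omega
      have : (π 0 : ℕ) ≠ m+2 := fun h => hne (Fin.ext (by omega))
      have := (π 0).isLt
      omega
  · exfalso
    -- 2 ≤ k ≤ m+1 : produce a forbidden pattern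
    have hkcl : 2 ≤ (k : ℕ) ∧ (k : ℕ) ≤ m+1 := by have := k.isLt; omega
    have h0k : (0 : Fin (m+3)) < k := by rw [Fin.lt_def, Fin.val_zero]; omega
    have h1k : (1 : Fin (m+3)) < k := by rw [Fin.lt_def]; simp; omega
    have hklast : k < Fin.last (m+2) := by rw [Fin.lt_def]; simp; omega
    set L := Fin.last (m+2) with hL
    have hL0 := before_max_gt hπ hkval h0k hklast
    have hL1 := before_max_gt hπ hkval h1k hklast
    rw [Fin.lt_def] at hL0 hL1
    have h01 : π 0 ≠ π 1 := fun h => by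
      have := congrArg Fin.val (hbij.injective h); simp at this
    have hv0k : (π 0 : ℕ) < m+2 := by
      have hne : π 0 ≠ π k := fun h => by
        have := congrArg Fin.val (hbij.injective h); simp at this; omega
      have : (π 0 : ℕ) ≠ m+2 := fun h => hne (Fin.ext (by omega))
      have := (π 0).isLt; omega
    have hv1k : (π 1 : ℕ) < m+2 := by
      have hne : π 1 ≠ π k := fun h => by
        have := congrArg Fin.val (hbij.injective h); simp at this; omega
      have : (π 1 : ℕ) ≠ m+2 := fun h => hne (Fin.ext (by omega))
      have := (π 1).isLt; omega
    have h01v : (π 0 : ℕ) ≠ (π 1 : ℕ) := fun h => h01 (Fin.ext h)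
    rw [Fin.lt_def] at h0k h1k hklast
    rcases Nat.lt_or_ge (π 0 : ℕ) (π 1 : ℕ) with hlt | hge
    · -- pattern 2341 at positions 0 1 k last
      apply hπ.2.2.1
      refine ⟨![0, 1, k, L], ?_, ?_⟩
      · have hmono : ∀ a b : Fin 4, (a:ℕ) < (b:ℕ) →
            ((![0, 1, k, L] a : Fin (m+3)) : ℕ) < ((![0, 1, k, L] b : Fin (m+3)) : ℕ) := by
          simp only [Fin.forall_fin_succ, Fin.forall_fin_one, Matrix.cons_val_zero,
            Matrix.cons_val_succ, Fin.val_zero, Fin.val_succ, IsEmpty.forall_iff, and_true,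
            hL, Fin.val_last, Fin.val_one]
          omega
        intro a b hab
        rw [Fin.lt_def] at hab ⊢
        exact hmono a b hab
      · have hiff : ∀ a b : Fin 4, (![2,3,4,1] a : ℕ) < ![2,3,4,1] b ↔
            ((π (![0, 1, k, L] a) : Fin (m+3)) : ℕ) < ((π (![0, 1, k, L] b) : Fin (m+3)) : ℕ) := by
          simp only [Fin.forall_fin_succ, Fin.forall_fin_one, Matrix.cons_val_zero,
            Matrix.cons_val_succ, IsEmpty.forall_iff, and_true]
          omega
        intro a b
        rw [Fin.lt_def]
        exact hiff a b
    · -- pattern 3241 at positions 0 1 k last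
      apply hπ.2.2.2
      refine ⟨![0, 1, k, L], ?_, ?_⟩
      · have hmono : ∀ a b : Fin 4, (a:ℕ) < (b:ℕ) →
            ((![0, 1, k, L] a : Fin (m+3)) : ℕ) < ((![0, 1, k, L] b : Fin (m+3)) : ℕ) := by
          simp only [Fin.forall_fin_succ, Fin.forall_fin_one, Matrix.cons_val_zero,
            Matrix.cons_val_succ, Fin.val_zero, Fin.val_succ, IsEmpty.forall_iff, and_true,
            hL, Fin.val_last, Fin.val_one]
          omega
        intro a b hab
        rw [Fin.lt_def] at hab ⊢
        exact hmono a b hab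
      · have hiff : ∀ a b : Fin 4, (![3,2,4,1] a : ℕ) < ![3,2,4,1] b ↔
            ((π (![0, 1, k, L] a) : Fin (m+3)) : ℕ) < ((π (![0, 1, k, L] b) : Fin (m+3)) : ℕ) := by
          simp only [Fin.forall_fin_succ, Fin.forall_fin_one, Matrix.cons_val_zero,
            Matrix.cons_val_succ, IsEmpty.forall_iff, and_true]
          omega
        intro a b
        rw [Fin.lt_def]
        exact hiff a b

lemma appEnd_inj {m : ℕ} : Function.Injective (appEnd (m := m)) := by
  intro C C' h
  funext i
  have := congrFun h ⟨(i:ℕ), by omega⟩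
  have hv := congrArg Fin.val this
  rw [appEnd_val_lt C _ (by exact i.isLt), appEnd_val_lt C' _ (by exact i.isLt)] at hv
  exact Fin.ext (by simpa using hv)

lemma preTop_inj {m : ℕ} : Function.Injective (preTop (m := m)) := by
  intro C C' h
  funext i
  have := congrFun h ⟨(i:ℕ)+1, by omega⟩
  have hv := congrArg Fin.val this
  rw [preTop_val_pos C _ (by simp), preTop_val_pos C' _ (by simp)] at hv
  simp only at hv
  refine Fin.ext ?_
  have e1 : (⟨(i:ℕ)+1-1, by omega⟩ : Fin m) = i := Fin.ext (by simp)
  rw [e1] at hv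
  exact hv

lemma preTwo_inj {m : ℕ} : Function.Injective (preTwo (m := m)) := by
  intro C C' h
  funext i
  have := congrFun h ⟨(i:ℕ)+2, by omega⟩
  have hv := congrArg Fin.val this
  rw [preTwo_val_big C _ (by show ¬((i:ℕ)+2 = 0); omega) (by show ¬((i:ℕ)+2 = 1); omega),
    preTwo_val_big C' _ (by show ¬((i:ℕ)+2 = 0); omega) (by show ¬((i:ℕ)+2 = 1); omega)] at hv
  simp only at hv
  refine Fin.ext ?_
  have e1 : (⟨(i:ℕ)+2-2, by omega⟩ : Fin m) = i := Fin.ext (by simp)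
  rw [e1] at hv
  exact hv

lemma no_contains_small {n k : ℕ} (h : n < k) (π : Fin n → Fin n) (p : Fin k → ℕ) :
    ¬ Contains π p := by
  rintro ⟨f, hf, -⟩
  have := Fintype.card_le_of_injective f hf.injective
  simp only [Fintype.card_fin] at this
  omega

noncomputable def bijEquivPerm (α : Type*) : {f : α → α // Function.Bijective f} ≃ Equiv.Perm α where
  toFun f := Equiv.ofBijective f.1 f.2
  invFun e := ⟨e, e.bijective⟩
  left_inv f := Subtype.ext rfl
  right_inv e := Equiv.ext fun x => rfl

lemma tss_one : (TSS132 1).ncard = 1 := by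
  have : TSS132 1 = Set.univ := by
    ext π
    simp only [Set.mem_univ, iff_true, TSS132, Set.mem_setOf_eq]
    refine ⟨Finite.injective_iff_bijective.mp (Function.injective_of_subsingleton π),
      no_contains_small (by omega) _ _, no_contains_small (by omega) _ _,
      no_contains_small (by omega) _ _⟩
  rw [this, Set.ncard_univ, Nat.card_eq_fintype_card]
  simp

lemma tss_two : (TSS132 2).ncard = 2 := by
  have h : TSS132 2 = {π : Fin 2 → Fin 2 | Function.Bijective π} := by
    ext π
    simp only [TSS132, Set.mem_setOf_eq]
    refine ⟨fun h => h.1, fun h => ⟨h, no_contains_small (by omega) _ _,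
      no_contains_small (by omega) _ _, no_contains_small (by omega) _ _⟩⟩
  rw [h]
  have e : ↥{π : Fin 2 → Fin 2 | Function.Bijective π} ≃ Equiv.Perm (Fin 2) :=
    bijEquivPerm (Fin 2)
  rw [← Nat.card_coe_set_eq, Nat.card_congr e, Nat.card_eq_fintype_card]
  simp [Fintype.card_perm]

lemma tss_card : ∀ n : ℕ, (TSS132 (n+1)).ncard = pell (n+1) := by
  intro n
  induction n using Nat.strong_induction_on with
  | _ n ih =>
    match n, ih with
    | 0, _ => simpa [pell] using tss_one
    | 1, _ => simpa [pell] using tss_two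
    | (t+2), ih =>
      have ih1 : (TSS132 (t+2)).ncard = pell (t+2) := ih (t+1) (by omega)
      have ih2 : (TSS132 (t+1)).ncard = pell (t+1) := ih t (by omega)
      set A1 : Set (Fin (t+3) → Fin (t+3)) := appEnd '' TSS132 (t+2) with hA1
      set A2 : Set (Fin (t+3) → Fin (t+3)) := preTop '' TSS132 (t+2) with hA2
      set A3 : Set (Fin (t+3) → Fin (t+3)) := preTwo '' TSS132 (t+1) with hA3
      have hsplit : TSS132 (t+3) = (A1 ∪ A2) ∪ A3 := by
        ext π
        constructor
        · intro hm
          rcases trichotomy hm with h | h | ⟨h0, h1⟩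
          · obtain ⟨C, hCb, rfl⟩ := appEnd_recon hm.1 h
            exact Or.inl (Or.inl ⟨C, tss_of_appEnd hCb hm, rfl⟩)
          · obtain ⟨C, hCb, rfl⟩ := preTop_recon hm.1 h
            exact Or.inl (Or.inr ⟨C, tss_of_preTop hCb hm, rfl⟩)
          · obtain ⟨C, hCb, rfl⟩ := preTwo_recon hm.1 h0 h1
            exact Or.inr ⟨C, tss_of_preTwo hCb hm, rfl⟩
        · rintro ((⟨C, hC, rfl⟩ | ⟨C, hC, rfl⟩) | ⟨C, hC, rfl⟩)
          · exact appEnd_tss hC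
          · exact preTop_tss hC
          · exact preTwo_tss hC
      have d12 : Disjoint A1 A2 := by
        rw [Set.disjoint_left]
        rintro π ⟨C, -, rfl⟩ ⟨D, -, hD⟩
        have h1 : (appEnd C (Fin.last (t+2)) : ℕ) = t+2 :=
          appEnd_val_top C _ (by simp)
        have h2 : (appEnd C (Fin.last (t+2)) : ℕ) < t+2 := by
          rw [← hD, preTop_val_pos D _ (by simp)]
          exact (D _).isLt
        omega
      have d13 : Disjoint A1 A3 := by
        rw [Set.disjoint_left]
        rintro π ⟨C, -, rfl⟩ ⟨D, -, hD⟩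
        have h1 : (appEnd C (Fin.last (t+2)) : ℕ) = t+2 :=
          appEnd_val_top C _ (by simp)
        have h2 : (appEnd C (Fin.last (t+2)) : ℕ) < t+1 := by
          rw [← hD, preTwo_val_big D _ (by simp) (by simp)]
          exact (D _).isLt
        omega
      have d23 : Disjoint A2 A3 := by
        rw [Set.disjoint_left]
        rintro π ⟨C, -, rfl⟩ ⟨D, -, hD⟩
        have h1 : (preTop C 0 : ℕ) = t+2 := preTop_val_zero C _ (by simp)
        have h2 : (preTop C 0 : ℕ) = t+1 := by
          rw [← hD, preTwo_val_zero D _ (by simp)]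
        omega
      have hcard : (TSS132 (t+3)).ncard = A1.ncard + A2.ncard + A3.ncard := by
        rw [hsplit, Set.ncard_union_eq (by exact Set.disjoint_union_left.mpr ⟨d13, d23⟩)
          (Set.toFinite _) (Set.toFinite _),
          Set.ncard_union_eq d12 (Set.toFinite _) (Set.toFinite _)]
      rw [hcard, hA1, hA2, hA3, Set.ncard_image_of_injective _ appEnd_inj,
        Set.ncard_image_of_injective _ preTop_inj,
        Set.ncard_image_of_injective _ preTwo_inj, ih1, ih2]
      show _ = pell (t+3)
      rw [show pell (t+3) = 2 * pell (t+2) + pell (t+1) from rfl]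
      ring

def RLset {N : ℕ} (π : Fin N → Fin N) : Set (Fin N) := {i | ∀ j, i < j → π j < π i}

lemma rl_card_eq {N : ℕ} (π : Fin N → Fin N) :
    Nat.card {i : Fin N // ∀ j, i < j → π j < π i} = (RLset π).ncard := by
  rw [← Nat.card_coe_set_eq]
  exact Nat.card_congr (Equiv.subtypeEquivRight fun i => Iff.rfl)

lemma rl_of_last {N : ℕ} {π : Fin (N+1) → Fin (N+1)} (h : (π (Fin.last N) : ℕ) = N) :
    RLset π = {Fin.last N} := by
  ext i
  simp only [RLset, Set.mem_setOf_eq, Set.mem_singleton_iff]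
  constructor
  · intro hi
    by_contra hne
    have hlt : i < Fin.last N := Fin.lt_last_iff_ne_last.mpr hne
    have := hi _ hlt
    rw [Fin.lt_def, h] at this
    have := (π i).isLt
    omega
  · rintro rfl j hj
    rw [Fin.lt_def, Fin.val_last] at hj
    have := j.isLt
    omega

lemma rl_mem_last {N : ℕ} (π : Fin (N+1) → Fin (N+1)) : Fin.last N ∈ RLset π := by
  intro j hj
  rw [Fin.lt_def, Fin.val_last] at hj
  have := j.isLt
  omega

lemma rl_card_one {N : ℕ} {π : Fin (N+1) → Fin (N+1)} (hbij : Function.Bijective π)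
    (h : (RLset π).ncard = 1) : (π (Fin.last N) : ℕ) = N := by
  obtain ⟨a, ha⟩ := Set.ncard_eq_one.mp h
  obtain ⟨k, hk⟩ := hbij.surjective ⟨N, by omega⟩
  have hkv : (π k : ℕ) = N := by rw [hk]
  have hkm : k ∈ RLset π := by
    intro j hj
    have hne : π j ≠ π k := fun he => by
      have := hbij.injective he
      subst this
      exact absurd hj (lt_irrefl _)
    rw [Fin.lt_def, hkv]
    have h1 : (π j : ℕ) ≠ N := fun he => hne (Fin.ext (by omega))
    have := (π j).isLt
    omega
  have h1 : k = a := by rw [ha] at hkm; exact hkm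
  have h2 : Fin.last N = a := by have := rl_mem_last π; rw [ha] at this; exact this
  rw [h1.trans h2.symm] at hkv
  exact hkv

lemma rl_preTop {m : ℕ} (C : Fin m → Fin m) :
    RLset (preTop C) = insert 0 (Fin.succ '' RLset C) := by
  ext i
  simp only [RLset, Set.mem_setOf_eq, Set.mem_insert_iff, Set.mem_image]
  constructor
  · intro hi
    by_cases h0 : (i : ℕ) = 0
    · exact Or.inl (Fin.ext (by simpa using h0))
    · right
      refine ⟨⟨(i:ℕ)-1, by omega⟩, ?_, Fin.ext (by simp [Fin.val_succ]; omega)⟩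
      intro j hj
      rw [Fin.lt_def] at hj
      simp only at hj
      have := hi ⟨(j:ℕ)+1, by omega⟩ (by rw [Fin.lt_def]; simp; omega)
      rw [Fin.lt_def, preTop_val_pos C _ (by show ¬((j:ℕ)+1 = 0); omega),
        preTop_val_pos C i h0] at this
      rw [Fin.lt_def]
      have e1 : (⟨(((⟨(j:ℕ)+1, by omega⟩ : Fin (m+1)) : ℕ)) - 1, by omega⟩ : Fin m) = j :=
        Fin.ext (by simp)
      rw [e1] at this
      exact this
  · rintro (rfl | ⟨i', hi', rfl⟩)
    · intro j hj
      rw [Fin.lt_def, preTop_val_zero C 0 (by simp)]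
      have hj0 : (j : ℕ) ≠ 0 := by
        rw [Fin.lt_def] at hj; simp at hj; omega
      rw [preTop_val_pos C j hj0]
      exact (C _).isLt
    · intro j hj
      rw [Fin.lt_def, Fin.val_succ] at hj
      have hj0 : (j : ℕ) ≠ 0 := by omega
      rw [Fin.lt_def, preTop_val_pos C j hj0,
        preTop_val_pos C i'.succ (by simp [Fin.val_succ])]
      have e2 : (⟨((i'.succ : Fin (m+1)) : ℕ) - 1, by omega⟩ : Fin m) = i' :=
        Fin.ext (by simp [Fin.val_succ])
      rw [e2]
      have := hi' ⟨(j:ℕ)-1, by omega⟩ (by rw [Fin.lt_def]; simp; omega)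
      rw [Fin.lt_def] at this
      simpa using this

lemma rl_preTwo {m : ℕ} (C : Fin m → Fin m) :
    RLset (preTwo C) = insert 1 ((fun i : Fin m => (⟨(i:ℕ)+2, by omega⟩ : Fin (m+2))) '' RLset C) := by
  ext i
  simp only [RLset, Set.mem_setOf_eq, Set.mem_insert_iff, Set.mem_image]
  constructor
  · intro hi
    have hine : (i : ℕ) ≠ 0 := by
      intro h0
      have h01 : i < (1 : Fin (m+2)) := by rw [Fin.lt_def, Fin.val_one]; omega
      have := hi 1 h01
      rw [Fin.lt_def, preTwo_val_zero C i h0, preTwo_val_one C 1 (by simp)] at this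
      omega
    by_cases h1 : (i : ℕ) = 1
    · exact Or.inl (Fin.ext (by simpa using h1))
    · right
      refine ⟨⟨(i:ℕ)-2, by omega⟩, ?_, Fin.ext (by simp; omega)⟩
      intro j hj
      rw [Fin.lt_def] at hj
      simp only at hj
      have := hi ⟨(j:ℕ)+2, by omega⟩ (by rw [Fin.lt_def]; simp; omega)
      rw [Fin.lt_def, preTwo_val_big C _ (by show ¬((j:ℕ)+2 = 0); omega)
          (by show ¬((j:ℕ)+2 = 1); omega),
        preTwo_val_big C i (by omega) h1] at this
      rw [Fin.lt_def]
      have e1 : (⟨(((⟨(j:ℕ)+2, by omega⟩ : Fin (m+2)) : ℕ)) - 2, by omega⟩ : Fin m) = j :=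
        Fin.ext (by simp)
      rw [e1] at this
      exact this
  · rintro (rfl | ⟨i', hi', rfl⟩)
    · intro j hj
      have hj1 : 2 ≤ (j : ℕ) := by
        rw [Fin.lt_def] at hj; simp at hj; omega
      rw [Fin.lt_def, preTwo_val_one C 1 (by simp),
        preTwo_val_big C j (by omega) (by omega)]
      have := (C ⟨(j:ℕ)-2, by omega⟩).isLt
      omega
    · intro j hj
      rw [Fin.lt_def] at hj
      simp only at hj
      have hj2 : 2 ≤ (j : ℕ) := by omega
      rw [Fin.lt_def, preTwo_val_big C j (by omega) (by omega),
        preTwo_val_big C _ (by show ¬((i':ℕ)+2 = 0); omega) (by show ¬((i':ℕ)+2 = 1); omega)]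
      have e2 : (⟨(((⟨(i':ℕ)+2, by omega⟩ : Fin (m+2)) : ℕ)) - 2, by omega⟩ : Fin m) = i' :=
        Fin.ext (by simp)
      rw [e2]
      have := hi' ⟨(j:ℕ)-2, by omega⟩ (by rw [Fin.lt_def]; simp; omega)
      rw [Fin.lt_def] at this
      simpa using this

theorem stmt_17 (n : ℕ) (hn : 4 ≤ n) :
    Nat.card ↥{π ∈ TSS132 n | Nat.card {i : Fin n // ∀ j, i < j → π j < π i} = 2} =
      pell (n-2) + pell (n-3) := by
  obtain ⟨m, rfl⟩ : ∃ m, n = m + 4 := ⟨n - 4, by omega⟩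
  have hn2 : m + 4 - 2 = m + 2 := by omega
  have hn3 : m + 4 - 3 = m + 1 := by omega
  rw [hn2, hn3]
  set B1 : Set (Fin (m+4) → Fin (m+4)) := preTop '' (appEnd '' TSS132 (m+2)) with hB1
  set B2 : Set (Fin (m+4) → Fin (m+4)) := preTwo '' (appEnd '' TSS132 (m+1)) with hB2
  have key : {π ∈ TSS132 (m+4) | Nat.card {i : Fin (m+4) // ∀ j, i < j → π j < π i} = 2}
      = B1 ∪ B2 := by
    ext π
    simp only [Set.mem_setOf_eq, Set.mem_union]
    constructor
    · rintro ⟨hm, hc⟩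
      rw [rl_card_eq] at hc
      rcases trichotomy (m := m+1) hm with h | h | ⟨h0, h1⟩
      · exfalso
        rw [rl_of_last h, Set.ncard_singleton] at hc
        omega
      · obtain ⟨C, hCb, rfl⟩ := preTop_recon hm.1 h
        have hCt : C ∈ TSS132 (m+3) := tss_of_preTop hCb hm
        rw [rl_preTop] at hc
        rw [Set.ncard_insert_of_notMem (by
            rintro ⟨x, -, hx⟩
            exact Fin.succ_ne_zero x hx) (Set.toFinite _),
          Set.ncard_image_of_injective _ (Fin.succ_injective _)] at hc
        have hone : (RLset C).ncard = 1 := by omega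
        have hlast := rl_card_one hCb hone
        obtain ⟨D, hDb, rfl⟩ := appEnd_recon hCb hlast
        exact Or.inl ⟨appEnd D, ⟨D, tss_of_appEnd hDb hCt, rfl⟩, rfl⟩
      · obtain ⟨C, hCb, rfl⟩ := preTwo_recon hm.1 h0 h1
        have hCt : C ∈ TSS132 (m+2) := tss_of_preTwo hCb hm
        rw [rl_preTwo] at hc
        rw [Set.ncard_insert_of_notMem (by
            rintro ⟨x, -, hx⟩
            have := congrArg Fin.val hx
            simp at this) (Set.toFinite _),
          Set.ncard_image_of_injective _ (by
            intro a b hab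
            have := congrArg Fin.val hab
            simp at this
            exact Fin.ext this)] at hc
        have hone : (RLset C).ncard = 1 := by omega
        have hlast := rl_card_one hCb hone
        obtain ⟨D, hDb, rfl⟩ := appEnd_recon hCb hlast
        exact Or.inr ⟨appEnd D, ⟨D, tss_of_appEnd hDb hCt, rfl⟩, rfl⟩
    · rintro (⟨x, ⟨D, hD, rfl⟩, rfl⟩ | ⟨x, ⟨D, hD, rfl⟩, rfl⟩)
      · refine ⟨preTop_tss (appEnd_tss hD), ?_⟩
        rw [rl_card_eq, rl_preTop, rl_of_last (appEnd_val_top D _ (by simp)),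
          Set.image_singleton]
        rw [Set.ncard_insert_of_notMem (by
            intro hx
            simp only [Set.mem_singleton_iff] at hx
            exact Fin.succ_ne_zero _ hx.symm) (Set.toFinite _), Set.ncard_singleton]
      · refine ⟨preTwo_tss (appEnd_tss hD), ?_⟩
        rw [rl_card_eq, rl_preTwo, rl_of_last (appEnd_val_top D _ (by simp)),
          Set.image_singleton]
        rw [Set.ncard_insert_of_notMem (by
            intro hx
            simp only [Set.mem_singleton_iff] at hx
            have := congrArg Fin.val hx
            simp at this) (Set.toFinite _), Set.ncard_singleton]
  rw [Nat.card_coe_set_eq, key]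
  have hdisj : Disjoint B1 B2 := by
    rw [Set.disjoint_left]
    rintro π ⟨C, -, rfl⟩ ⟨D, -, hD⟩
    have h1 : (preTop C 0 : ℕ) = m+3 := preTop_val_zero C 0 (by simp)
    have h2 : (preTop C 0 : ℕ) = m+2 := by
      rw [← hD, preTwo_val_zero D 0 (by simp)]
    omega
  rw [Set.ncard_union_eq hdisj (Set.toFinite _) (Set.toFinite _), hB1, hB2,
    Set.ncard_image_of_injective _ preTop_inj,
    Set.ncard_image_of_injective _ preTwo_inj,
    Set.ncard_image_of_injective _ appEnd_inj,
    Set.ncard_image_of_injective _ appEnd_inj,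
    tss_card (m+1), tss_card m]
end

section
/- For all n ≥ 0, the number of permutations of {1,...,n} avoiding the patterns 132, 2341, and 3241 that contain exactly one subsequence of type 123 (i.e., exactly one increasing subsequence of length 3) equals F_{n+2} - n - 1, where F_k is the k-th Fibonacci number. -/
set_option maxHeartbeats 1000000

abbrev Occ {n : ℕ} (π : Fin n → Fin n) := {f : Fin 3 → Fin n // StrictMono f ∧ StrictMono (π ∘ f)}

def Good (n : ℕ) : Set (Fin n → Fin n) :=
  {π ∈ TSS132 n | Nat.card (Occ π) = 1}

lemma sm3 {α : Type*} [Preorder α] {f : Fin 3 → α} (h1 : f 0 < f 1) (h2 : f 1 < f 2) :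
    StrictMono f := by
  intro a b hab
  fin_cases a <;> fin_cases b <;>
    first
      | exact absurd hab (by decide)
      | exact h1
      | exact h2
      | exact h1.trans h2

lemma sm4 {α : Type*} [Preorder α] {f : Fin 4 → α} (h1 : f 0 < f 1) (h2 : f 1 < f 2)
    (h3 : f 2 < f 3) : StrictMono f := by
  intro a b hab
  fin_cases a <;> fin_cases b <;>
    first
      | exact absurd hab (by decide)
      | exact h1
      | exact h2
      | exact h3
      | exact h1.trans h2
      | exact h2.trans h3
      | exact (h1.trans h2).trans h3
lemma shift_down {n s k : ℕ} (f : Fin k → Fin (n+s)) (hf : StrictMono f)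
    (h0 : ∀ i, s ≤ (f i : ℕ)) :
    ∃ g : Fin k → Fin n, StrictMono g ∧ ∀ i, (f i : ℕ) = (g i : ℕ) + s := by
  refine ⟨fun i => ⟨(f i : ℕ) - s, by have := (f i).isLt; have := h0 i; omega⟩, ?_, ?_⟩
  · intro a b hab
    have h1 := hf hab
    rw [Fin.lt_def] at h1 ⊢
    have := h0 a
    simp only
    omega
  · intro i
    have := h0 i
    simp only
    omega

def T1 {n : ℕ} (π : Fin n → Fin n) : Fin (n+1) → Fin (n+1) :=
  Fin.cons (Fin.last n) (fun i => (π i).castSucc)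

lemma T1_succ {n : ℕ} (π : Fin n → Fin n) (i : Fin n) : T1 π i.succ = (π i).castSucc := by
  simp [T1]

lemma T1_zero {n : ℕ} (π : Fin n → Fin n) : T1 π 0 = Fin.last n := by simp [T1]

lemma contains_T1 {n k : ℕ} (π : Fin n → Fin n) (p : Fin (k+1) → ℕ) (j : Fin (k+1))
    (hj : p 0 < p j) : Contains (T1 π) p ↔ Contains π p := by
  constructor
  · rintro ⟨f, hf, hiff⟩
    have h0 : ∀ i, 1 ≤ (f i : ℕ) := by
      intro i
      have hf0 : f 0 ≠ 0 := by
        intro h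
        have h2 := (hiff 0 j).mp hj
        rw [h, T1_zero] at h2
        exact not_lt_of_ge (Fin.le_last _) h2
      have h3 : f 0 ≤ f i := hf.monotone (Fin.zero_le i)
      have h4 : (f 0 : ℕ) ≠ 0 := fun h => hf0 (Fin.ext h)
      have := Fin.le_def.mp h3
      omega
    obtain ⟨g, hg, hgf⟩ := shift_down f hf h0
    have hfe : ∀ i, f i = (g i).succ := fun i => Fin.ext (by rw [hgf i]; simp)
    refine ⟨g, hg, fun a b => ?_⟩
    have := hiff a b
    rw [hfe a, hfe b, T1_succ, T1_succ, Fin.castSucc_lt_castSucc_iff] at this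
    exact this
  · rintro ⟨f, hf, hiff⟩
    refine ⟨fun i => (f i).succ, fun a b hab => Fin.succ_lt_succ_iff.mpr (hf hab), fun a b => ?_⟩
    rw [T1_succ, T1_succ, Fin.castSucc_lt_castSucc_iff]
    exact hiff a b

lemma occ_T1 {n : ℕ} (π : Fin n → Fin n) :
    Nat.card (Occ (T1 π)) = Nat.card (Occ π) := by
  refine (Nat.card_eq_of_bijective
    (fun e => ⟨fun i => (e.1 i).succ, fun a b hab => Fin.succ_lt_succ_iff.mpr (e.2.1 hab),
      fun a b hab => by
        simp only [Function.comp_apply, T1_succ, Fin.castSucc_lt_castSucc_iff]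
        exact e.2.2 hab⟩) ⟨?_, ?_⟩).symm
  · intro e1 e2 h
    apply Subtype.ext
    funext i
    have := congrArg (fun z => z.1 i) h
    simpa [Fin.succ_inj] using this
  · rintro ⟨f, hf, hmf⟩
    have h0 : ∀ i, 1 ≤ (f i : ℕ) := by
      intro i
      have hf0 : f 0 ≠ 0 := by
        intro h
        have h2 : T1 π (f 0) < T1 π (f 1) := hmf (by decide : (0:Fin 3) < 1)
        rw [h, T1_zero] at h2
        exact not_lt_of_ge (Fin.le_last _) h2
      have h3 : f 0 ≤ f i := hf.monotone (Fin.zero_le i)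
      have h4 : (f 0 : ℕ) ≠ 0 := fun h => hf0 (Fin.ext h)
      have := Fin.le_def.mp h3
      omega
    obtain ⟨g, hg, hgf⟩ := shift_down f hf h0
    have hfe : ∀ i, f i = (g i).succ := fun i => Fin.ext (by rw [hgf i]; simp)
    refine ⟨⟨g, hg, fun a b hab => ?_⟩, ?_⟩
    · have := hmf hab
      rw [Function.comp_apply, Function.comp_apply, hfe a, hfe b, T1_succ, T1_succ,
        Fin.castSucc_lt_castSucc_iff] at this
      exact this
    · apply Subtype.ext
      funext i
      exact (hfe i).symm
def T2 {n : ℕ} (π : Fin n → Fin n) : Fin (n+2) → Fin (n+2) :=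
  Fin.cons ⟨n, by omega⟩ (Fin.cons (Fin.last (n+1)) (fun i => ((π i).castSucc).castSucc))

lemma T2_zero {n : ℕ} (π : Fin n → Fin n) : T2 π 0 = ⟨n, by omega⟩ := by simp [T2]

lemma T2_one {n : ℕ} (π : Fin n → Fin n) : T2 π 1 = Fin.last (n+1) := by
  have : (1 : Fin (n+2)) = (0 : Fin (n+1)).succ := rfl
  rw [this, T2, Fin.cons_succ, Fin.cons_zero]

lemma T2_succ {n : ℕ} (π : Fin n → Fin n) (i : Fin n) :
    T2 π i.succ.succ = ((π i).castSucc).castSucc := by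
  rw [T2, Fin.cons_succ, Fin.cons_succ]

-- key: positions ≥ 2 have values < n
lemma T2_big {n : ℕ} (π : Fin n → Fin n) (q : Fin (n+2)) (hq : 2 ≤ (q:ℕ)) :
    (T2 π q : ℕ) < n := by
  have h1 : q = (⟨(q:ℕ)-2, by have := q.isLt; omega⟩ : Fin n).succ.succ := Fin.ext (by simp; omega)
  rw [h1, T2_succ]
  simpa using (π _).isLt

lemma strictMono_two {n k : ℕ} (f : Fin (k+1) → Fin n) (hf : StrictMono f) (j : Fin (k+1))
    (h2 : 2 ≤ (j:ℕ)) (h0 : (f 0 : ℕ) = 0) : 2 ≤ (f j : ℕ) := by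
  have hk : 1 < k + 1 := by omega
  have h1 : f 0 < f ⟨1, hk⟩ := hf (by rw [Fin.lt_def]; simp)
  have hj : f ⟨1, hk⟩ < f j := hf (by rw [Fin.lt_def]; simp; omega)
  rw [Fin.lt_def] at h1 hj
  omega

lemma contains_T2 {n k : ℕ} (π : Fin n → Fin n) (p : Fin (k+1) → ℕ) (j : Fin (k+1))
    (hj2 : 2 ≤ (j:ℕ)) (hj : p 0 < p j) : Contains (T2 π) p ↔ Contains π p := by
  constructor
  · rintro ⟨f, hf, hiff⟩
    have key := (hiff 0 j).mp hj
    have h0 : 2 ≤ (f 0 : ℕ) := by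
      rcases Nat.lt_or_ge (f 0 : ℕ) 2 with h | h
      · exfalso
        interval_cases h1 : (f 0 : ℕ)
        · -- f 0 = 0 : value n, f j has value < n
          have hf0 : f 0 = 0 := Fin.ext h1
          rw [hf0, T2_zero] at key
          have hbig : (T2 π (f j) : ℕ) < n := T2_big π (f j) (strictMono_two f hf j hj2 h1)
          rw [Fin.lt_def] at key
          simp at key
          omega
        · -- f 0 = 1 : value last
          have hf0 : f 0 = (1 : Fin (n+2)) := Fin.ext (by simpa using h1)
          rw [hf0, T2_one] at key
          exact not_lt_of_ge (Fin.le_last _) key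
      · exact h
    have hall : ∀ i, 2 ≤ (f i : ℕ) := by
      intro i
      have h3 := Fin.le_def.mp (hf.monotone (Fin.zero_le i))
      omega
    obtain ⟨g, hg, hgf⟩ := shift_down f hf hall
    have hfe : ∀ i, f i = (g i).succ.succ := fun i => Fin.ext (by rw [hgf i]; simp)
    refine ⟨g, hg, fun a b => ?_⟩
    have := hiff a b
    rw [hfe a, hfe b, T2_succ, T2_succ, Fin.castSucc_lt_castSucc_iff,
      Fin.castSucc_lt_castSucc_iff] at this
    exact this
  · rintro ⟨f, hf, hiff⟩
    refine ⟨fun i => (f i).succ.succ,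
      fun a b hab => Fin.succ_lt_succ_iff.mpr (Fin.succ_lt_succ_iff.mpr (hf hab)),
      fun a b => ?_⟩
    rw [T2_succ, T2_succ, Fin.castSucc_lt_castSucc_iff, Fin.castSucc_lt_castSucc_iff]
    exact hiff a b

lemma occ_T2 {n : ℕ} (π : Fin n → Fin n) :
    Nat.card (Occ (T2 π)) = Nat.card (Occ π) := by
  refine (Nat.card_eq_of_bijective
    (fun e => ⟨fun i => (e.1 i).succ.succ,
      fun a b hab => Fin.succ_lt_succ_iff.mpr (Fin.succ_lt_succ_iff.mpr (e.2.1 hab)),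
      fun a b hab => by
        simp only [Function.comp_apply, T2_succ, Fin.castSucc_lt_castSucc_iff]
        exact e.2.2 hab⟩) ⟨?_, ?_⟩).symm
  · intro e1 e2 h
    apply Subtype.ext
    funext i
    have := congrArg (fun z => z.1 i) h
    simpa [Fin.succ_inj] using this
  · rintro ⟨f, hf, hmf⟩
    have h01 : T2 π (f 0) < T2 π (f 1) := hmf (by decide : (0:Fin 3) < 1)
    have h12 : T2 π (f 1) < T2 π (f 2) := hmf (by decide : (1:Fin 3) < 2)
    have hm01 := hf (by decide : (0:Fin 3) < 1)
    have hm12 := hf (by decide : (1:Fin 3) < 2)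
    have h0 : 2 ≤ (f 0 : ℕ) := by
      rcases Nat.lt_or_ge (f 0 : ℕ) 2 with h | h
      · exfalso
        interval_cases h1 : (f 0 : ℕ)
        · -- f 0 = 0, value = n; need T2 π (f 1) > n ⇒ f 1 = 1 ⇒ value last < T2 π (f 2), contra
          have hf0 : f 0 = 0 := Fin.ext h1
          rw [hf0, T2_zero] at h01
          have hf1 : (f 1 : ℕ) = 1 := by
            rcases Nat.lt_or_ge (f 1 : ℕ) 2 with h' | h'
            · have : (0:ℕ) < (f 1 : ℕ) := by
                have := Fin.lt_def.mp hm01; omega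
              omega
            · exfalso
              have := T2_big π (f 1) h'
              rw [Fin.lt_def] at h01
              simp at h01
              omega
          have : f 1 = (1 : Fin (n+2)) := Fin.ext (by simpa using hf1)
          rw [this, T2_one] at h12
          exact not_lt_of_ge (Fin.le_last _) h12
        · have hf0 : f 0 = (1 : Fin (n+2)) := Fin.ext (by simpa using h1)
          rw [hf0, T2_one] at h01
          exact not_lt_of_ge (Fin.le_last _) h01
      · exact h
    have hall : ∀ i, 2 ≤ (f i : ℕ) := by
      intro i
      have h3 := Fin.le_def.mp (hf.monotone (Fin.zero_le i))
      omega
    obtain ⟨g, hg, hgf⟩ := shift_down f hf hall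
    have hfe : ∀ i, f i = (g i).succ.succ := fun i => Fin.ext (by rw [hgf i]; simp)
    refine ⟨⟨g, hg, fun a b hab => ?_⟩, ?_⟩
    · have := hmf hab
      rw [Function.comp_apply, Function.comp_apply, hfe a, hfe b, T2_succ, T2_succ,
        Fin.castSucc_lt_castSucc_iff, Fin.castSucc_lt_castSucc_iff] at this
      exact this
    · exact Subtype.ext (funext fun i => (hfe i).symm)
def sig {n : ℕ} (j : Fin (n+1)) : Fin (n+3) → Fin (n+3) :=
  fun i => ⟨if (i:ℕ) = n+2 then n+2 else if (i:ℕ) = (j:ℕ) then n-(j:ℕ)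
    else if (i:ℕ) = (j:ℕ)+1 then n+1-(j:ℕ) else n+1-(i:ℕ), by
      have := j.isLt; split_ifs <;> omega⟩

lemma sig_val {n : ℕ} (j : Fin (n+1)) (i : Fin (n+3)) :
    (sig j i : ℕ) = if (i:ℕ) = n+2 then n+2 else if (i:ℕ) = (j:ℕ) then n-(j:ℕ)
      else if (i:ℕ) = (j:ℕ)+1 then n+1-(j:ℕ) else n+1-(i:ℕ) := rfl

lemma sig_asc {n : ℕ} (j : Fin (n+1)) (p q : Fin (n+3)) (hpq : p < q)
    (h : sig j p < sig j q) : ((p:ℕ) = (j:ℕ) ∧ (q:ℕ) = (j:ℕ)+1) ∨ (q:ℕ) = n+2 := by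
  have hj := j.isLt
  have hp := p.isLt
  have hq := q.isLt
  rw [Fin.lt_def] at hpq h
  rw [sig_val, sig_val] at h
  split_ifs at h <;> omega

lemma sig_inj {n : ℕ} (j : Fin (n+1)) : Function.Injective (sig j) := by
  intro a b h
  have hj := j.isLt
  have ha := a.isLt
  have hb := b.isLt
  rw [Fin.ext_iff, sig_val, sig_val] at h
  apply Fin.ext
  split_ifs at h <;> omega

lemma sig_bij {n : ℕ} (j : Fin (n+1)) : Function.Bijective (sig j) :=
  Finite.injective_iff_bijective.mp (sig_inj j)

lemma sig_avoids132 {n : ℕ} (j : Fin (n+1)) : ¬ Contains (sig j) ![1,3,2] := by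
  rintro ⟨f, hf, hiff⟩
  have hj := j.isLt
  have h01 := (hiff 0 1).mp (by decide)
  have h02 := (hiff 0 2).mp (by decide)
  have h21 := (hiff 2 1).mp (by decide)
  rcases sig_asc j _ _ (hf (by decide : (0:Fin 3) < 1)) h01 with ⟨hfa, hfb⟩ | hfl
  · rcases sig_asc j _ _ (hf (by decide : (0:Fin 3) < 2)) h02 with ⟨hfa', hfb'⟩ | hfl'
    · have := Fin.lt_def.mp (hf (by decide : (1:Fin 3) < 2))
      omega
    · -- f 2 = last, but sig(f 2) < sig(f 1) while sig(f 1) has val < n+2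
      have h1 : (sig j (f 1) : ℕ) < n+2 := by
        rw [sig_val]
        have := (f 1).isLt
        split_ifs <;> omega
      have h2 : (sig j (f 2) : ℕ) = n+2 := by rw [sig_val]; simp [hfl']
      have := Fin.lt_def.mp h21
      omega
  · have := Fin.lt_def.mp (hf (by decide : (1:Fin 3) < 2))
    have := (f 2).isLt
    omega

lemma sig_avoids2341 {n : ℕ} (j : Fin (n+1)) : ¬ Contains (sig j) ![2,3,4,1] := by
  rintro ⟨f, hf, hiff⟩
  have hj := j.isLt
  have h01 := (hiff 0 1).mp (by decide)
  have h12 := (hiff 1 2).mp (by decide)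
  rcases sig_asc j _ _ (hf (by decide : (0:Fin 4) < 1)) h01 with ⟨hfa, hfb⟩ | hfl
  · rcases sig_asc j _ _ (hf (by decide : (1:Fin 4) < 2)) h12 with ⟨hfa', hfb'⟩ | hfl'
    · omega
    · have := Fin.lt_def.mp (hf (by decide : (2:Fin 4) < 3))
      have := (f 3).isLt
      omega
  · have := Fin.lt_def.mp (hf (by decide : (1:Fin 4) < 2))
    have := (f 2).isLt
    omega

lemma sig_avoids3241 {n : ℕ} (j : Fin (n+1)) : ¬ Contains (sig j) ![3,2,4,1] := by
  rintro ⟨f, hf, hiff⟩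
  have hj := j.isLt
  have h02 := (hiff 0 2).mp (by decide)
  rcases sig_asc j _ _ (hf (by decide : (0:Fin 4) < 2)) h02 with ⟨hfa, hfb⟩ | hfl
  · have := Fin.lt_def.mp (hf (by decide : (0:Fin 4) < 1))
    have := Fin.lt_def.mp (hf (by decide : (1:Fin 4) < 2))
    omega
  · have := Fin.lt_def.mp (hf (by decide : (2:Fin 4) < 3))
    have := (f 3).isLt
    omega

lemma sig_occ {n : ℕ} (j : Fin (n+1)) : Nat.card (Occ (sig j)) = 1 := by
  have hj := j.isLt
  have hval : ∀ f : Fin 3 → Fin (n+3), StrictMono f → StrictMono (sig j ∘ f) →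
      (f 0 : ℕ) = (j:ℕ) ∧ (f 1 : ℕ) = (j:ℕ)+1 ∧ (f 2 : ℕ) = n+2 := by
    intro f hf hm
    have h01 : sig j (f 0) < sig j (f 1) := hm (by decide : (0:Fin 3) < 1)
    have h12 : sig j (f 1) < sig j (f 2) := hm (by decide : (1:Fin 3) < 2)
    rcases sig_asc j _ _ (hf (by decide : (1:Fin 3) < 2)) h12 with ⟨hfa, hfb⟩ | hfl
    · rcases sig_asc j _ _ (hf (by decide : (0:Fin 3) < 1)) h01 with ⟨hfa', hfb'⟩ | hfl'
      · omega
      · omega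
    · rcases sig_asc j _ _ (hf (by decide : (0:Fin 3) < 1)) h01 with ⟨hfa', hfb'⟩ | hfl'
      · exact ⟨hfa', hfb', hfl⟩
      · have := Fin.lt_def.mp (hf (by decide : (1:Fin 3) < 2))
        omega
  rw [Nat.card_eq_one_iff_unique]
  constructor
  · constructor
    intro a b
    obtain ⟨ha0, ha1, ha2⟩ := hval a.1 a.2.1 a.2.2
    obtain ⟨hb0, hb1, hb2⟩ := hval b.1 b.2.1 b.2.2
    apply Subtype.ext
    funext i
    fin_cases i <;> apply Fin.ext <;> simp_all
  · refine ⟨⟨![⟨(j:ℕ), by omega⟩, ⟨(j:ℕ)+1, by omega⟩, ⟨n+2, by omega⟩], ?_, ?_⟩⟩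
    · apply sm3 <;> simp [Fin.lt_def] <;> omega
    · refine sm3 ?_ ?_
      all_goals
        show sig j _ < sig j _
        simp only [Matrix.cons_val_zero, Matrix.cons_val_one, Matrix.head_cons,
          Matrix.cons_val_two, Matrix.tail_cons]
        rw [Fin.lt_def, sig_val, sig_val]
        simp only
        split_ifs <;> omega
lemma mem_Good_iff {n : ℕ} (π : Fin n → Fin n) :
    π ∈ Good n ↔ (Function.Bijective π ∧ ¬ Contains π ![1,3,2] ∧ ¬ Contains π ![2,3,4,1] ∧
      ¬ Contains π ![3,2,4,1]) ∧ Nat.card (Occ π) = 1 := Iff.rfl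

lemma T1_inj_iff {n : ℕ} (π : Fin n → Fin n) :
    Function.Bijective (T1 π) ↔ Function.Bijective π := by
  rw [← Finite.injective_iff_bijective, ← Finite.injective_iff_bijective]
  constructor
  · intro h a b hab
    have : T1 π a.succ = T1 π b.succ := by rw [T1_succ, T1_succ, hab]
    simpa [Fin.succ_inj] using h this
  · intro h x y hxy
    induction x using Fin.cases with
    | zero =>
      induction y using Fin.cases with
      | zero => rfl
      | succ i =>
        exfalso
        rw [T1_zero, T1_succ] at hxy
        have := (π i).isLt
        rw [Fin.ext_iff] at hxy
        simp at hxy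
        omega
    | succ i =>
      induction y using Fin.cases with
      | zero =>
        exfalso
        rw [T1_zero, T1_succ] at hxy
        have := (π i).isLt
        rw [Fin.ext_iff] at hxy
        simp at hxy
        omega
      | succ b =>
        rw [T1_succ, T1_succ] at hxy
        have : π i = π b := by
          rw [Fin.ext_iff] at hxy ⊢
          simpa using hxy
        rw [h this]

lemma T1_mem {n : ℕ} (π : Fin n → Fin n) : T1 π ∈ Good (n+1) ↔ π ∈ Good n := by
  rw [mem_Good_iff, mem_Good_iff, T1_inj_iff, occ_T1,
    contains_T1 π ![1,3,2] 1 (by decide),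
    contains_T1 π ![2,3,4,1] 1 (by decide),
    contains_T1 π ![3,2,4,1] 2 (by decide)]

lemma T2_cases {n : ℕ} (x : Fin (n+2)) :
    x = 0 ∨ x = 1 ∨ ∃ i : Fin n, x = i.succ.succ := by
  rcases Nat.lt_or_ge (x:ℕ) 2 with h | h
  · interval_cases h' : (x:ℕ)
    · exact Or.inl (Fin.ext h')
    · exact Or.inr (Or.inl (Fin.ext (by rw [h']; rfl)))
  · refine Or.inr (Or.inr ⟨⟨(x:ℕ)-2, by have := x.isLt; omega⟩, Fin.ext ?_⟩)
    simp
    omega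

lemma T2_inj_iff {n : ℕ} (π : Fin n → Fin n) :
    Function.Bijective (T2 π) ↔ Function.Bijective π := by
  rw [← Finite.injective_iff_bijective, ← Finite.injective_iff_bijective]
  constructor
  · intro h a b hab
    have : T2 π a.succ.succ = T2 π b.succ.succ := by rw [T2_succ, T2_succ, hab]
    simpa [Fin.succ_inj] using h this
  · intro h x y hxy
    have hval : ∀ i : Fin n, (T2 π i.succ.succ : ℕ) = (π i : ℕ) := by
      intro i; rw [T2_succ]; rfl
    rcases T2_cases x with rfl | rfl | ⟨i, rfl⟩ <;> rcases T2_cases y with rfl | rfl | ⟨b, rfl⟩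
    · rfl
    · exfalso; rw [Fin.ext_iff, T2_zero, T2_one] at hxy; simp [Fin.last] at hxy
    · exfalso
      rw [Fin.ext_iff, T2_zero] at hxy
      have := (π b).isLt
      rw [hval b] at hxy
      simp at hxy
      omega
    · exfalso; rw [Fin.ext_iff, T2_zero, T2_one] at hxy; simp [Fin.last] at hxy
    · rfl
    · exfalso
      rw [Fin.ext_iff, T2_one] at hxy
      have := (π b).isLt
      rw [hval b] at hxy
      simp [Fin.last] at hxy
      omega
    · exfalso
      rw [Fin.ext_iff, T2_zero] at hxy
      have := (π i).isLt
      rw [hval i] at hxy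
      simp at hxy
      omega
    · exfalso
      rw [Fin.ext_iff, T2_one] at hxy
      have := (π i).isLt
      rw [hval i] at hxy
      simp [Fin.last] at hxy
      omega
    · have : π i = π b := by
        rw [Fin.ext_iff] at hxy
        rw [hval i, hval b] at hxy
        exact Fin.ext hxy
      rw [h this]

lemma T2_mem {n : ℕ} (π : Fin n → Fin n) : T2 π ∈ Good (n+2) ↔ π ∈ Good n := by
  rw [mem_Good_iff, mem_Good_iff, T2_inj_iff, occ_T2,
    contains_T2 π ![1,3,2] 2 (by decide) (by decide),
    contains_T2 π ![2,3,4,1] 2 (by decide) (by decide),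
    contains_T2 π ![3,2,4,1] 2 (by decide) (by decide)]

lemma A_eq {n : ℕ} :
    {π' ∈ Good (n+1) | π' 0 = Fin.last n} = T1 '' Good n := by
  ext π'
  constructor
  · rintro ⟨hg, h0⟩
    have hinj : Function.Injective π' := hg.1.1.injective
    have hlt : ∀ i : Fin n, (π' i.succ : ℕ) < n := by
      intro i
      have h1 : π' i.succ ≠ Fin.last n := by
        intro h
        have : i.succ = (0 : Fin (n+1)) := hinj (by rw [h, h0])
        exact (Fin.succ_ne_zero i) this
      have h2 := (π' i.succ).isLt
      have h3 : (π' i.succ : ℕ) ≠ n := fun h => h1 (Fin.ext (by simp [Fin.last, h]))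
      omega
    set π : Fin n → Fin n := fun i => ⟨(π' i.succ : ℕ), hlt i⟩ with hπ
    have hT : T1 π = π' := by
      funext x
      induction x using Fin.cases with
      | zero => rw [T1_zero, h0]
      | succ i => rw [T1_succ]; exact Fin.ext rfl
    exact ⟨π, (T1_mem π).mp (by rw [hT]; exact hg), hT⟩
  · rintro ⟨π, hπ, rfl⟩
    exact ⟨(T1_mem π).mpr hπ, T1_zero π⟩
lemma B_eq {n : ℕ} :
    {π' ∈ Good (n+2) | π' 1 = Fin.last (n+1)} = T2 '' Good n := by
  ext π'
  constructor
  · rintro ⟨hg, h1⟩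
    have hinj : Function.Injective π' := hg.1.1.injective
    have hv1 : (π' 1 : ℕ) = n+1 := by rw [h1]; rfl
    obtain ⟨m, hm⟩ := hg.1.1.surjective ⟨n, by omega⟩
    have hvm : (π' m : ℕ) = n := by rw [hm]
    have hm1 : (m : ℕ) ≠ 1 := by
      intro h
      have : m = 1 := Fin.ext (by simpa using h)
      rw [this] at hvm
      omega
    have h0 : π' 0 = ⟨n, by omega⟩ := by
      by_contra h0ne
      have hm0 : (m:ℕ) ≠ 0 := by
        intro h
        exact h0ne ((Fin.ext h : m = 0) ▸ hm)
      have hm2 : 2 ≤ (m:ℕ) := by omega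
      have hv0 : (π' 0 : ℕ) < n := by
        have e1 : (π' 0 : ℕ) ≠ n+1 := by
          intro h
          have : π' 0 = π' 1 := Fin.ext (by rw [hv1, h])
          have := hinj this
          exact absurd (congrArg Fin.val this) (by simp)
        have e2 : (π' 0 : ℕ) ≠ n := by
          intro h
          have : π' 0 = π' m := Fin.ext (by rw [hvm, h])
          exact hm0 (congrArg Fin.val (hinj this)).symm
        have := (π' 0).isLt
        omega
      apply hg.1.2.1
      refine ⟨![0, 1, m], sm3 (by simp [Fin.lt_def]) (by simp [Fin.lt_def]; omega), ?_⟩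
      intro i j
      fin_cases i <;> fin_cases j <;>
        simp only [Fin.mk_zero, Fin.mk_one, Fin.lt_def, Matrix.cons_val_zero, Matrix.cons_val_one,
          Matrix.head_cons, show (⟨2, by omega⟩ : Fin 3) = 2 from rfl, Matrix.cons_val_two,
          Matrix.tail_cons] <;> omega
    have hlt : ∀ i : Fin n, (π' i.succ.succ : ℕ) < n := by
      intro i
      have hvss : ((i.succ.succ : Fin (n+2)) : ℕ) = (i:ℕ) + 2 := by simp
      have e1 : (π' i.succ.succ : ℕ) ≠ n+1 := by
        intro h
        have : π' i.succ.succ = π' 1 := Fin.ext (by rw [hv1, h])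
        have := congrArg Fin.val (hinj this)
        rw [hvss] at this
        simp at this
      have e2 : (π' i.succ.succ : ℕ) ≠ n := by
        intro h
        have hv00 : (π' 0 : ℕ) = n := by rw [h0]
        have : π' i.succ.succ = π' 0 := Fin.ext (by rw [hv00, h])
        have := congrArg Fin.val (hinj this)
        rw [hvss] at this
        simp at this
      have := (π' i.succ.succ).isLt
      omega
    have hT : T2 (fun i => (⟨(π' i.succ.succ : ℕ), hlt i⟩ : Fin n)) = π' := by
      funext x
      rcases T2_cases x with rfl | rfl | ⟨i, rfl⟩
      · rw [T2_zero, h0]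
      · rw [T2_one, h1]
      · rw [T2_succ]; exact Fin.ext rfl
    exact ⟨fun i => ⟨(π' i.succ.succ : ℕ), hlt i⟩, (T2_mem _).mp (by rw [hT]; exact hg), hT⟩
  · rintro ⟨π, hπ, rfl⟩
    exact ⟨(T2_mem π).mpr hπ, T2_one π⟩

lemma mem_cases {n : ℕ} (π : Fin (n+3) → Fin (n+3)) (h : π ∈ Good (n+3)) :
    π 0 = Fin.last (n+2) ∨ π 1 = Fin.last (n+2) ∨ π (Fin.last (n+2)) = Fin.last (n+2) := by
  obtain ⟨k, hk⟩ := h.1.1.surjective (Fin.last (n+2))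
  have hinj : Function.Injective π := h.1.1.injective
  rcases Nat.lt_or_ge (k:ℕ) 2 with hsm | hbig
  · interval_cases h' : (k:ℕ)
    · exact Or.inl ((Fin.ext h' : k = 0) ▸ hk)
    · exact Or.inr (Or.inl ((Fin.ext (by rw [h']; rfl) : k = 1) ▸ hk))
  rcases Nat.lt_or_ge (k:ℕ) (n+2) with hkl | hkb
  swap
  · have : k = Fin.last (n+2) := Fin.ext (by have := k.isLt; simp [Fin.last]; omega)
    exact Or.inr (Or.inr (this ▸ hk))
  exfalso
  obtain ⟨l, hlv⟩ : ∃ l : Fin (n+3), (l:ℕ) = (k:ℕ)+1 := ⟨⟨(k:ℕ)+1, by omega⟩, rfl⟩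
  have hkltl : k < l := by rw [Fin.lt_def]; omega
  have hvk : (π k : ℕ) = n+2 := by rw [hk]; rfl
  have hne : ∀ x y : Fin (n+3), x ≠ y → (π x : ℕ) ≠ (π y : ℕ) := by
    intro x y hxy hh
    exact hxy (hinj (Fin.ext hh))
  have hvl : (π l : ℕ) < n+2 := by
    have e : (π l : ℕ) ≠ (π k : ℕ) := hne l k (by
      intro hh
      rw [hh] at hlv
      omega)
    have := (π l).isLt
    omega
  have key : ∀ x : Fin (n+3), (x:ℕ) < (k:ℕ) → (π l : ℕ) < (π x : ℕ) := by
    intro x hx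
    rcases Nat.lt_or_ge (π x : ℕ) (π l : ℕ) with hc | hc
    · exfalso
      apply h.1.2.1
      refine ⟨![x, k, l], sm3 (show x < k by rw [Fin.lt_def]; omega) hkltl, ?_⟩
      intro i j
      fin_cases i <;> fin_cases j <;>
        simp only [Fin.mk_zero, Fin.mk_one, Fin.lt_def, Matrix.cons_val_zero, Matrix.cons_val_one,
          Matrix.head_cons, show (⟨2, by omega⟩ : Fin 3) = 2 from rfl, Matrix.cons_val_two,
          Matrix.tail_cons] <;> omega
    · have : (π x : ℕ) ≠ (π l : ℕ) := hne x l (by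
        intro hh
        rw [hh] at hx
        omega)
      omega
  have h0 := key 0 (by show (0:ℕ) < (k:ℕ); omega)
  have h1 := key 1 (by simp [Fin.val_one]; omega)
  have hv0 : (π 0 : ℕ) < n + 2 := by
    have e : (π 0 : ℕ) ≠ (π k : ℕ) := hne 0 k (by
      intro hh
      rw [← hh] at hbig
      simp at hbig)
    have := (π 0).isLt
    omega
  have hv1 : (π 1 : ℕ) < n + 2 := by
    have e : (π 1 : ℕ) ≠ (π k : ℕ) := hne 1 k (by
      intro hh
      rw [← hh] at hbig
      simp [Fin.val_one] at hbig)
    have := (π 1).isLt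
    omega
  have h01v : ((0 : Fin (n+3)) : ℕ) = 0 := rfl
  have h11v : ((1 : Fin (n+3)) : ℕ) = 1 := rfl
  have hlt01 : (0 : Fin (n+3)) < 1 := by rw [Fin.lt_def]; omega
  have hlt1k : (1 : Fin (n+3)) < k := by rw [Fin.lt_def]; omega
  have h01 : (π 0 : ℕ) ≠ (π 1 : ℕ) := hne 0 1 (by
    intro hh
    exact absurd (congrArg Fin.val hh) (by simp))
  rcases Nat.lt_or_ge (π 0 : ℕ) (π 1 : ℕ) with hc | hc
  · apply h.1.2.2.1
    refine ⟨![0, 1, k, l], sm4 hlt01 hlt1k hkltl, ?_⟩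
    intro i j
    fin_cases i <;> fin_cases j <;>
      simp only [Fin.mk_zero, Fin.mk_one, Fin.lt_def, Matrix.cons_val_zero, Matrix.cons_val_one,
        Matrix.head_cons, show (⟨2, by omega⟩ : Fin 4) = 2 from rfl,
        show (⟨3, by omega⟩ : Fin 4) = 3 from rfl, Matrix.cons_val_two,
        Matrix.tail_cons, Matrix.cons_val_three] <;> omega
  · apply h.1.2.2.2
    refine ⟨![0, 1, k, l], sm4 hlt01 hlt1k hkltl, ?_⟩
    intro i j
    fin_cases i <;> fin_cases j <;>
      simp only [Fin.mk_zero, Fin.mk_one, Fin.lt_def, Matrix.cons_val_zero, Matrix.cons_val_one,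
        Matrix.head_cons, show (⟨2, by omega⟩ : Fin 4) = 2 from rfl,
        show (⟨3, by omega⟩ : Fin 4) = 3 from rfl, Matrix.cons_val_two,
        Matrix.tail_cons, Matrix.cons_val_three] <;> omega
lemma C_eq {n : ℕ} :
    {π ∈ Good (n+3) | π (Fin.last (n+2)) = Fin.last (n+2)} =
      Set.range (fun j : Fin (n+1) => sig j) := by
  ext π
  constructor
  · rintro ⟨hg, hlast⟩
    have hinj : Function.Injective π := hg.1.1.injective
    have hcard := hg.2
    rw [Nat.card_eq_one_iff_unique] at hcard
    obtain ⟨hsub, ⟨⟨f, hf, hm⟩⟩⟩ := hcard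
    have hvlt : ∀ q : Fin (n+3), (q:ℕ) < n+2 → (π q : ℕ) < n+2 := by
      intro q hq
      have h1 : (π q : ℕ) ≠ n+2 := by
        intro hh
        have h2 : π q = π (Fin.last (n+2)) := Fin.ext (by rw [hlast]; exact hh)
        have h3 := congrArg Fin.val (hinj h2)
        simp [Fin.last] at h3
        omega
      have := (π q).isLt
      omega
    have hlastlt : ∀ q : Fin (n+3), (q:ℕ) < n+2 → q < Fin.last (n+2) := by
      intro q hq
      rw [Fin.lt_def]
      simp [Fin.last]
      omega
    have hπlastlt : ∀ q : Fin (n+3), (q:ℕ) < n+2 → π q < π (Fin.last (n+2)) := by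
      intro q hq
      rw [hlast, Fin.lt_def]
      have := hvlt q hq
      simp [Fin.last]
      omega
    have uniqNI : ∀ p q p' q' : Fin (n+3), p < q → (q:ℕ) < n+2 → π p < π q →
        p' < q' → (q':ℕ) < n+2 → π p' < π q' → p = p' ∧ q = q' := by
      intro p q p' q' h1 h2 h3 h4 h5 h6
      have e := hsub.elim
        (⟨![p, q, Fin.last (n+2)], sm3 h1 (hlastlt q h2), sm3 h3 (hπlastlt q h2)⟩ : Occ π)
        (⟨![p', q', Fin.last (n+2)], sm3 h4 (hlastlt q' h5), sm3 h6 (hπlastlt q' h5)⟩ : Occ π)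
      exact ⟨congrArg (fun z : Occ π => z.1 0) e, congrArg (fun z : Occ π => z.1 1) e⟩
    have hf01 : f 0 < f 1 := hf (by decide)
    have hf12 : f 1 < f 2 := hf (by decide)
    have hm01 : π (f 0) < π (f 1) := hm (by decide)
    have hj0v : ((f 1 : Fin (n+3)) : ℕ) < n+2 := by
      have := Fin.lt_def.mp hf12
      have := (f 2).isLt
      omega
    have hi0j0 : (π (f 0) : ℕ) < (π (f 1) : ℕ) := Fin.lt_def.mp hm01
    have hf01v : ((f 0 : Fin (n+3)) : ℕ) < ((f 1 : Fin (n+3)) : ℕ) := Fin.lt_def.mp hf01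
    have hadj : ((f 1 : Fin (n+3)) : ℕ) = ((f 0 : Fin (n+3)) : ℕ) + 1 := by
      by_contra hne'
      have hmid : ((f 0:Fin (n+3)):ℕ)+1 < ((f 1:Fin (n+3)):ℕ) := by omega
      obtain ⟨mid, hmidv⟩ : ∃ m : Fin (n+3), (m:ℕ) = ((f 0:Fin (n+3)):ℕ)+1 :=
        ⟨⟨_, by have := (f 1).isLt; omega⟩, rfl⟩
      have hmlt : mid < f 1 := by rw [Fin.lt_def]; omega
      have hilt : f 0 < mid := by rw [Fin.lt_def]; omega
      have hmv : (mid:ℕ) < n+2 := by omega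
      rcases lt_trichotomy (π mid) (π (f 0)) with hc | hc | hc
      · obtain ⟨e1, e2⟩ := uniqNI mid (f 1) (f 0) (f 1) hmlt hj0v (lt_trans hc hm01)
          hf01 hj0v hm01
        have := congrArg Fin.val e1
        omega
      · have := congrArg Fin.val (hinj hc)
        omega
      · obtain ⟨e1, e2⟩ := uniqNI (f 0) mid (f 0) (f 1) hilt hmv hc hf01 hj0v hm01
        have := congrArg Fin.val e2
        omega
    have hdesc : ∀ p q : Fin (n+3), p < q → (q:ℕ) < n+2 → ¬(p = f 0 ∧ q = f 1) →
        (π q : ℕ) < (π p : ℕ) := by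
      intro p q h1 h2 h3
      rcases lt_trichotomy (π p) (π q) with hc | hc | hc
      · exact absurd (uniqNI p q (f 0) (f 1) h1 h2 hc hf01 hj0v hm01) h3
      · exact absurd (hinj hc) h1.ne
      · exact Fin.lt_def.mp hc
    obtain ⟨sw, swi0, swj0, swo⟩ : ∃ sw : Fin (n+3) → Fin (n+3),
        sw (f 0) = f 1 ∧ sw (f 1) = f 0 ∧ ∀ x, x ≠ f 0 → x ≠ f 1 → sw x = x := by
      refine ⟨fun x => if x = f 0 then f 1 else if x = f 1 then f 0 else x, ?_, ?_, ?_⟩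
      · simp
      · simp [hf01.ne']
      · intro x h1 h2
        simp [h1, h2]
    have hswv : ∀ x : Fin (n+3), (x:ℕ) < n+2 → ((sw x:Fin (n+3)):ℕ) < n+2 := by
      intro x hx
      by_cases e1 : x = f 0
      · rw [e1, swi0]; omega
      by_cases e2 : x = f 1
      · rw [e2, swj0]; omega
      rw [swo x e1 e2]; exact hx
    have hswsw : ∀ x, sw (sw x) = x := by
      intro x
      by_cases e1 : x = f 0
      · rw [e1, swi0, swj0]
      by_cases e2 : x = f 1
      · rw [e2, swj0, swi0]
      rw [swo x e1 e2, swo x e1 e2]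
    have tdesc : ∀ p q : Fin (n+3), p < q → (q:ℕ) < n+2 →
        (π (sw q) : ℕ) < (π (sw p) : ℕ) := by
      intro p q hpq hq
      have hpqv := Fin.lt_def.mp hpq
      by_cases hp1 : p = f 0
      · by_cases hq2 : q = f 1
        · rw [hp1, hq2, swi0, swj0]; exact hi0j0
        · have hq1 : q ≠ f 0 := by rw [hp1] at hpq; exact hpq.ne'
          rw [hp1, swi0, swo q hq1 hq2]
          refine hdesc (f 1) q ?_ hq ?_
          · rw [Fin.lt_def]
            have h1 : ((q:Fin (n+3)):ℕ) ≠ ((f 1:Fin (n+3)):ℕ) :=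
              fun hh => hq2 (Fin.ext hh)
            rw [hp1] at hpqv
            omega
          · rintro ⟨a, -⟩
            exact absurd (congrArg Fin.val a) (by omega)
      by_cases hp2 : p = f 1
      · have hq1 : q ≠ f 0 := by
          intro hh
          rw [hp2, hh] at hpqv
          omega
        have hq2 : q ≠ f 1 := by rw [hp2] at hpq; exact hpq.ne'
        rw [hp2, swj0, swo q hq1 hq2]
        refine hdesc (f 0) q ?_ hq ?_
        · rw [Fin.lt_def]
          rw [hp2] at hpqv
          omega
        · rintro ⟨-, b⟩
          exact hq2 b
      by_cases hq1 : q = f 0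
      · rw [swo p hp1 hp2, hq1, swi0]
        refine hdesc p (f 1) ?_ hj0v ?_
        · rw [Fin.lt_def]
          rw [hq1] at hpqv
          omega
        · rintro ⟨a, -⟩
          exact hp1 a
      by_cases hq2 : q = f 1
      · rw [swo p hp1 hp2, hq2, swj0]
        have hpi : (p:ℕ) < ((f 0:Fin (n+3)):ℕ) := by
          rw [hq2] at hpqv
          have : (p:ℕ) ≠ ((f 0:Fin (n+3)):ℕ) := fun hh => hp1 (Fin.ext hh)
          omega
        refine hdesc p (f 0) (by rw [Fin.lt_def]; omega) (by omega) ?_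
        · rintro ⟨a, -⟩
          exact hp1 a
      · rw [swo p hp1 hp2, swo q hq1 hq2]
        refine hdesc p q hpq hq ?_
        rintro ⟨a, -⟩
        exact hp1 a
    have hub : ∀ m : ℕ, ∀ x : Fin (n+3), (x:ℕ) = m → m < n+2 → (π (sw x) : ℕ) + m ≤ n+1 := by
      intro m
      induction m with
      | zero =>
        intro x hx _
        have := hvlt (sw x) (hswv x (by omega))
        omega
      | succ m ih =>
        intro x hx hm2
        have h1 := ih ⟨m, by omega⟩ rfl (by omega)
        have h2 := tdesc ⟨m, by omega⟩ x (by rw [Fin.lt_def]; simp; omega) (by omega)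
        omega
    have hlb : ∀ d : ℕ, ∀ x : Fin (n+3), (x:ℕ) + d = n+1 → d ≤ (π (sw x) : ℕ) := by
      intro d
      induction d with
      | zero => intro x _; omega
      | succ d ih =>
        intro x hx
        have h1 := ih ⟨(x:ℕ)+1, by omega⟩ (by simp; omega)
        have h2 := tdesc x ⟨(x:ℕ)+1, by omega⟩ (by rw [Fin.lt_def]; simp) (by simp; omega)
        omega
    have hτval : ∀ x : Fin (n+3), (x:ℕ) < n+2 → (π (sw x) : ℕ) = n+1 - (x:ℕ) := by
      intro x hx
      have h1 := hub (x:ℕ) x rfl hx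
      have h2 := hlb (n+1-(x:ℕ)) x (by omega)
      omega
    have hπval : ∀ x : Fin (n+3), (x:ℕ) < n+2 → (π x : ℕ) = n+1 - ((sw x : Fin (n+3)):ℕ) := by
      intro x hx
      have h1 := hτval (sw x) (hswv x hx)
      rw [hswsw x] at h1
      exact h1
    have hi0n : ((f 0:Fin (n+3)):ℕ) < n+1 := by omega
    refine ⟨⟨((f 0:Fin (n+3)):ℕ), hi0n⟩, ?_⟩
    funext x
    apply Fin.ext
    rw [sig_val]
    simp only
    by_cases hx : (x:ℕ) = n+2
    · rw [if_pos hx]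
      have hxl : x = Fin.last (n+2) := Fin.ext (by rw [hx]; rfl)
      rw [hxl, hlast]
      rfl
    · rw [if_neg hx]
      have hx2 : (x:ℕ) < n+2 := by have := x.isLt; omega
      have h1 := hπval x hx2
      by_cases e1 : x = f 0
      · rw [if_pos (by rw [e1])]
        rw [e1, swi0] at h1
        rw [e1]
        omega
      by_cases e2 : x = f 1
      · have hxv : (x:ℕ) = ((f 0:Fin (n+3)):ℕ) + 1 := by
          rw [e2] at hx2 ⊢
          omega
        rw [if_neg (by omega), if_pos (by omega)]
        rw [e2, swj0] at h1
        rw [e2]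
        omega
      · have hxv1 : (x:ℕ) ≠ ((f 0:Fin (n+3)):ℕ) := fun hh => e1 (Fin.ext hh)
        have hxv2 : (x:ℕ) ≠ ((f 1:Fin (n+3)):ℕ) := fun hh => e2 (Fin.ext hh)
        rw [if_neg (by omega), if_neg (by omega)]
        rw [swo x e1 e2] at h1
        omega
  · rintro ⟨j, rfl⟩
    refine ⟨⟨⟨sig_bij j, sig_avoids132 j, sig_avoids2341 j, sig_avoids3241 j⟩, sig_occ j⟩, ?_⟩
    apply Fin.ext
    rw [sig_val]
    simp [Fin.last]
lemma sig_j_inj {n : ℕ} : Function.Injective (fun j : Fin (n+1) => sig j) := by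
  intro j j' h
  have hj := j.isLt
  have hj' := j'.isLt
  have h2 := congrFun h (⟨(j:ℕ), by omega⟩ : Fin (n+3))
  simp only at h2
  rw [Fin.ext_iff, sig_val, sig_val] at h2
  simp only [Fin.val_mk] at h2
  apply Fin.ext
  split_ifs at h2 <;> omega

lemma Good_card_small (n : ℕ) (h : n < 3) : Nat.card (Good n) = 0 := by
  have he : Good n = ∅ := by
    ext π
    simp only [Set.mem_empty_iff_false, iff_false]
    intro hg
    have hcard := hg.2
    rw [Nat.card_eq_one_iff_unique] at hcard
    obtain ⟨-, ⟨⟨f, hf, -⟩⟩⟩ := hcard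
    have h01 := Fin.lt_def.mp (hf (by decide : (0:Fin 3) < 1))
    have h12 := Fin.lt_def.mp (hf (by decide : (1:Fin 3) < 2))
    have := (f 2).isLt
    omega
  rw [he, Nat.card_coe_set_eq, Set.ncard_empty]

lemma Good_rec (n : ℕ) :
    Nat.card (Good (n+3)) = Nat.card (Good (n+2)) + Nat.card (Good (n+1)) + (n+1) := by
  classical
  have hpart : Good (n+3) =
      ({π' ∈ Good (n+3) | π' 0 = Fin.last (n+2)} ∪
       ({π' ∈ Good (n+3) | π' 1 = Fin.last (n+2)} ∪
        {π' ∈ Good (n+3) | π' (Fin.last (n+2)) = Fin.last (n+2)})) := by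
    ext π
    constructor
    · intro h
      rcases mem_cases π h with h0 | h1 | h2
      · exact Or.inl ⟨h, h0⟩
      · exact Or.inr (Or.inl ⟨h, h1⟩)
      · exact Or.inr (Or.inr ⟨h, h2⟩)
    · rintro (⟨h,-⟩ | ⟨h,-⟩ | ⟨h,-⟩) <;> exact h
  have d1 : Disjoint {π' ∈ Good (n+3) | π' 0 = Fin.last (n+2)}
      ({π' ∈ Good (n+3) | π' 1 = Fin.last (n+2)} ∪
       {π' ∈ Good (n+3) | π' (Fin.last (n+2)) = Fin.last (n+2)}) := by
    rw [Set.disjoint_left]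
    rintro π ⟨hg, h0⟩ (⟨-, h1⟩ | ⟨-, h1⟩)
    · have h2 := hg.1.1.injective (h0.trans h1.symm)
      have h3 := congrArg Fin.val h2
      simp only [Fin.val_zero, Fin.val_one] at h3
      omega
    · have h2 := hg.1.1.injective (h0.trans h1.symm)
      have h3 := congrArg Fin.val h2
      simp only [Fin.val_zero, Fin.val_last] at h3
      omega
  have d2 : Disjoint {π' ∈ Good (n+3) | π' 1 = Fin.last (n+2)}
      {π' ∈ Good (n+3) | π' (Fin.last (n+2)) = Fin.last (n+2)} := by
    rw [Set.disjoint_left]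
    rintro π ⟨hg, h0⟩ ⟨-, h1⟩
    have h2 := hg.1.1.injective (h0.trans h1.symm)
    have h3 := congrArg Fin.val h2
    simp only [Fin.val_one, Fin.val_last] at h3
    omega
  have hT1inj : Function.Injective (T1 (n := n+2)) := by
    intro a b hab
    funext i
    have := congrFun hab i.succ
    rw [T1_succ, T1_succ] at this
    exact Fin.castSucc_injective _ this
  have hT2inj : Function.Injective (T2 (n := n+1)) := by
    intro a b hab
    funext i
    have := congrFun hab i.succ.succ
    rw [T2_succ, T2_succ] at this
    exact Fin.castSucc_injective _ (Fin.castSucc_injective _ this)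
  have cA : {π' ∈ Good (n+3) | π' 0 = Fin.last (n+2)}.ncard = Nat.card (Good (n+2)) := by
    rw [A_eq, Set.ncard_image_of_injective _ hT1inj, Nat.card_coe_set_eq]
  have cB : {π' ∈ Good (n+3) | π' 1 = Fin.last (n+2)}.ncard = Nat.card (Good (n+1)) := by
    rw [B_eq, Set.ncard_image_of_injective _ hT2inj, Nat.card_coe_set_eq]
  have cC : {π' ∈ Good (n+3) | π' (Fin.last (n+2)) = Fin.last (n+2)}.ncard = n+1 := by
    rw [C_eq, ← Nat.card_coe_set_eq, Nat.card_range_of_injective sig_j_inj,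
      Nat.card_eq_fintype_card, Fintype.card_fin]
  have hcount := congrArg Set.ncard hpart
  rw [Set.ncard_union_eq d1 (Set.toFinite _) (Set.toFinite _),
    Set.ncard_union_eq d2 (Set.toFinite _) (Set.toFinite _), cA, cB, cC] at hcount
  rw [Nat.card_coe_set_eq, hcount, Nat.add_assoc]

lemma Good_card_fib : ∀ n : ℕ, Nat.card (Good n) + (n+1) = Nat.fib (n+2) := by
  intro n
  induction n using Nat.strong_induction_on with
  | _ n ih =>
    obtain _|(_|(_|m)) := n
    · rw [Good_card_small 0 (by omega)]; decide
    · rw [Good_card_small 1 (by omega)]; decide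
    · rw [Good_card_small 2 (by omega)]; decide
    · have h1 := ih (m+2) (by omega)
      have h2 := ih (m+1) (by omega)
      have h3 := Nat.fib_add_two (n := m+3)
      rw [show m+2+2 = m+4 from by omega] at h1
      rw [show m+1+2 = m+3 from by omega] at h2
      rw [show m+3+2 = m+5 from by omega, show m+3+1 = m+4 from by omega] at h3
      rw [Good_rec, show m+3+2 = m+5 from by omega]
      omega

theorem stmt_18 (n : ℕ) :
    (Nat.card ↥{π ∈ TSS132 n |
        Nat.card {f : Fin 3 → Fin n // StrictMono f ∧ StrictMono (π ∘ f)} = 1} : ℤ) =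
      Nat.fib (n+2) - n - 1 := by
  have h := Good_card_fib n
  have he : {π ∈ TSS132 n |
      Nat.card {f : Fin 3 → Fin n // StrictMono f ∧ StrictMono (π ∘ f)} = 1} = Good n := rfl
  rw [he]
  have h' : (Nat.card (Good n) : ℤ) + ((n:ℤ) + 1) = (Nat.fib (n+2) : ℤ) := by
    exact_mod_cast h
  linarith
end
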